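/- arXiv:2202.03336 — 2 statements merged into one kernel-verified Lean document; each statement's English description precedes it below -/
import Mathlib

section
/- For the problem L with h, H ∈ ℝ, the characteristic function satisfies Δ(λ) = k·sin k + w·cos k + γ₁·cos(kξ₁) − γ₀·cos(k(1−ξ₀)) + O(exp(τ)) as |k| → ∞, where w = h − H − Q(1) and τ = |Im k|. -/
open Set Filter Asymptotics

/-- `y`, with derivative `y'`, solves `-y'' + q y = lam y` on `[0,1]`. -/
def IsSLSolution (q : ℝ → ℝ) (lam : ℂ) (y y' : ℝ → ℂ) : Prop :=
  (∀ x ∈ Set.Icc (0:ℝ) 1, HasDerivWithinAt y (y' x) (Set.Icc 0 1) x) ∧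
  (∀ x ∈ Set.Icc (0:ℝ) 1, HasDerivWithinAt y' (((q x : ℂ) - lam) * y x) (Set.Icc 0 1) x)

/-- The boundary form `U(y) = y'(0) + h y(0) - γ₀ y(ξ₀)`. -/
def Uform (h γ0 ξ0 : ℝ) (y y' : ℝ → ℂ) : ℂ := y' 0 + (h:ℂ) * y 0 - (γ0:ℂ) * y ξ0

/-- The boundary form `V(y) = y'(1) + H y(1) - γ₁ y(ξ₁)`. -/
def Vform (H γ1 ξ1 : ℝ) (y y' : ℝ → ℂ) : ℂ := y' 1 + (H:ℂ) * y 1 - (γ1:ℂ) * y ξ1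

open Topology intervalIntegral

noncomputable section SLall

lemma norm_sin_le' (z : ℂ) : ‖Complex.sin z‖ ≤ Real.exp |z.im| := by
  rw [Complex.sin]
  calc ‖(Complex.exp (-z * Complex.I) - Complex.exp (z * Complex.I)) * Complex.I / 2‖
      = (‖Complex.exp (-z * Complex.I) - Complex.exp (z * Complex.I)‖) / 2 := by
        simp [norm_mul, norm_div]
    _ ≤ (‖Complex.exp (-z * Complex.I)‖ + ‖Complex.exp (z * Complex.I)‖) / 2 := by
        gcongr; exact norm_sub_le _ _
    _ ≤ Real.exp |z.im| := by
        rw [Complex.norm_exp, Complex.norm_exp]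
        have h1 : (-z * Complex.I).re = z.im := by simp
        have h2 : (z * Complex.I).re = -z.im := by simp
        rw [h1, h2]
        have e1 : Real.exp z.im ≤ Real.exp |z.im| := Real.exp_le_exp.2 (le_abs_self _)
        have e2 : Real.exp (-z.im) ≤ Real.exp |z.im| := Real.exp_le_exp.2 (neg_le_abs _)
        linarith

lemma norm_cos_le' (z : ℂ) : ‖Complex.cos z‖ ≤ Real.exp |z.im| := by
  rw [Complex.cos]
  calc ‖(Complex.exp (z * Complex.I) + Complex.exp (-z * Complex.I)) / 2‖
      ≤ (‖Complex.exp (z * Complex.I)‖ + ‖Complex.exp (-z * Complex.I)‖) / 2 := by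
        rw [norm_div]; simp only [Complex.norm_ofNat]; gcongr; exact norm_add_le _ _
    _ ≤ Real.exp |z.im| := by
        rw [Complex.norm_exp, Complex.norm_exp]
        have h1 : (-z * Complex.I).re = z.im := by simp
        have h2 : (z * Complex.I).re = -z.im := by simp
        rw [h1, h2]
        have e1 : Real.exp z.im ≤ Real.exp |z.im| := Real.exp_le_exp.2 (le_abs_self _)
        have e2 : Real.exp (-z.im) ≤ Real.exp |z.im| := Real.exp_le_exp.2 (neg_le_abs _)
        linarith

lemma norm_sin_mul (k : ℂ) (r : ℝ) : ‖Complex.sin (k * (r:ℂ))‖ ≤ Real.exp (|k.im| * |r|) := by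
  have h : |(k * (r:ℂ)).im| = |k.im| * |r| := by
    simp [Complex.mul_im, abs_mul]
  calc ‖Complex.sin (k * (r:ℂ))‖ ≤ Real.exp |(k * (r:ℂ)).im| := norm_sin_le' _
    _ = Real.exp (|k.im| * |r|) := by rw [h]

lemma norm_cos_mul (k : ℂ) (r : ℝ) : ‖Complex.cos (k * (r:ℂ))‖ ≤ Real.exp (|k.im| * |r|) := by
  have h : |(k * (r:ℂ)).im| = |k.im| * |r| := by
    simp [Complex.mul_im, abs_mul]
  calc ‖Complex.cos (k * (r:ℂ))‖ ≤ Real.exp |(k * (r:ℂ)).im| := norm_cos_le' _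
    _ = Real.exp (|k.im| * |r|) := by rw [h]


lemma hd_lin (k c : ℂ) (x : ℝ) : HasDerivAt (fun y : ℝ => k * ((y:ℂ) - c)) k x := by
  have h : HasDerivAt (fun z : ℂ => k * (z - c)) k (x:ℂ) := by
    simpa using ((hasDerivAt_id ((x:ℂ))).sub_const c).const_mul k
  exact h.comp_ofReal

lemma hd_cos (k c : ℂ) (x : ℝ) :
    HasDerivAt (fun y : ℝ => Complex.cos (k * ((y:ℂ) - c)))
      (-(k * Complex.sin (k * ((x:ℂ) - c)))) x := by
  have h : HasDerivAt (fun z : ℂ => Complex.cos (k * (z - c)))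
      (-Complex.sin (k * ((x:ℂ) - c)) * k) (x:ℂ) := by
    have inner : HasDerivAt (fun z : ℂ => k * (z - c)) k (x:ℂ) := by
      simpa using ((hasDerivAt_id ((x:ℂ))).sub_const c).const_mul k
    exact (Complex.hasDerivAt_cos _).comp _ inner
  have := h.comp_ofReal
  convert this using 1; ring

lemma hd_sin (k c : ℂ) (x : ℝ) :
    HasDerivAt (fun y : ℝ => Complex.sin (k * ((y:ℂ) - c)))
      (k * Complex.cos (k * ((x:ℂ) - c))) x := by
  have h : HasDerivAt (fun z : ℂ => Complex.sin (k * (z - c)))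
      (Complex.cos (k * ((x:ℂ) - c)) * k) (x:ℂ) := by
    have inner : HasDerivAt (fun z : ℂ => k * (z - c)) k (x:ℂ) := by
      simpa using ((hasDerivAt_id ((x:ℂ))).sub_const c).const_mul k
    exact (Complex.hasDerivAt_sin _).comp _ inner
  have := h.comp_ofReal
  convert this using 1; ring

lemma hd_cexp (c : ℂ) (x : ℝ) :
    HasDerivAt (fun y : ℝ => Complex.exp (c * (y:ℂ))) (c * Complex.exp (c * (x:ℂ))) x := by
  have h : HasDerivAt (fun z : ℂ => Complex.exp (c * z)) (Complex.exp (c * (x:ℂ)) * c) (x:ℂ) := by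
    have inner : HasDerivAt (fun z : ℂ => c * z) c (x:ℂ) := by
      simpa using (hasDerivAt_id ((x:ℂ))).const_mul c
    exact (Complex.hasDerivAt_exp _).comp _ inner
  have := h.comp_ofReal
  convert this using 1; ring

lemma mem_nhds_Ici {x : ℝ} (hx0 : 0 ≤ x) (hx1 : x < 1) : Icc (0:ℝ) 1 ∈ 𝓝[Ici x] x := by
  rw [mem_nhdsWithin]
  exact ⟨Iio 1, isOpen_Iio, hx1, fun t ht => ⟨le_trans hx0 ht.2, le_of_lt ht.1⟩⟩

lemma mem_nhds_Iic {x : ℝ} (hx0 : 0 < x) (hx1 : x ≤ 1) : Icc (0:ℝ) 1 ∈ 𝓝[Iic x] x := by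
  rw [mem_nhdsWithin]
  exact ⟨Ioi 0, isOpen_Ioi, hx0, fun t ht => ⟨le_of_lt ht.1, le_trans ht.2 hx1⟩⟩

lemma mem_nhds_Ioi {x : ℝ} (hx0 : 0 ≤ x) (hx1 : x < 1) : Icc (0:ℝ) 1 ∈ 𝓝[Ioi x] x := by
  rw [mem_nhdsWithin]
  exact ⟨Iio 1, isOpen_Iio, hx1, fun t ht => ⟨le_trans hx0 (le_of_lt ht.2), le_of_lt ht.1⟩⟩

/-- FTC-1 within `Icc 0 1`. -/
lemma ftc_icc {f : ℝ → ℂ} (hf : ContinuousOn f (Icc 0 1)) {a x : ℝ}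
    (ha : a ∈ Icc (0:ℝ) 1) (hx : x ∈ Icc (0:ℝ) 1) :
    HasDerivWithinAt (fun u => ∫ t in a..u, f t) (f x) (Icc 0 1) x := by
  have hint : IntervalIntegrable f MeasureTheory.volume a x :=
    (hf.mono (uIcc_subset_Icc ha hx)).intervalIntegrable
  have hmeasfull : MeasureTheory.AEStronglyMeasurable f (MeasureTheory.volume.restrict (Icc (0:ℝ) 1)) :=
    hf.aestronglyMeasurable measurableSet_Icc
  rcases lt_or_eq_of_le hx.2 with hx1 | hx1
  · have mem1 : Icc (0:ℝ) 1 ∈ 𝓝[Ioi x] x := mem_nhds_Ioi hx.1 hx1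
    have hR : HasDerivWithinAt (fun u => ∫ t in a..u, f t) (f x) (Ici x) x :=
      integral_hasDerivWithinAt_right hint ⟨_, mem1, hmeasfull⟩
        ((hf x hx).mono_of_mem_nhdsWithin mem1)
    rcases lt_or_eq_of_le hx.1 with hx0 | hx0
    · have mem2 : Icc (0:ℝ) 1 ∈ 𝓝[Iic x] x := mem_nhds_Iic hx0 hx.2
      have hL : HasDerivWithinAt (fun u => ∫ t in a..u, f t) (f x) (Iic x) x :=
        integral_hasDerivWithinAt_right hint ⟨_, mem2, hmeasfull⟩
          ((hf x hx).mono_of_mem_nhdsWithin mem2)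
      exact (hL.union hR).mono (fun t _ => le_total t x)
    · exact hR.mono (fun t ht => hx0 ▸ ht.1)
  · have mem2 : Icc (0:ℝ) 1 ∈ 𝓝[Iic x] x := mem_nhds_Iic (hx1 ▸ one_pos) hx.2
    have hL : HasDerivWithinAt (fun u => ∫ t in a..u, f t) (f x) (Iic x) x :=
      integral_hasDerivWithinAt_right hint ⟨_, mem2, hmeasfull⟩
        ((hf x hx).mono_of_mem_nhdsWithin mem2)
    exact hL.mono (fun t ht => hx1 ▸ ht.2)

/-- Functions with vanishing derivative on `Icc 0 1` are constant. -/
lemma const_of_deriv_zero {f : ℝ → ℂ}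
    (hf : ∀ x ∈ Icc (0:ℝ) 1, HasDerivWithinAt f 0 (Icc 0 1) x) :
    ∀ x ∈ Icc (0:ℝ) 1, f x = f 0 := by
  apply constant_of_has_deriv_right_zero
  · exact fun x hx => (hf x hx).continuousWithinAt
  · intro x hx
    exact (hf x ⟨hx.1, hx.2.le⟩).mono_of_mem_nhdsWithin (mem_nhds_Ici hx.1 hx.2)


lemma rep {q : ℝ → ℝ} (hqc : ContinuousOn q (Icc 0 1)) {k : ℂ} (hk : k ≠ 0)
    {x0 : ℝ} (hx0 : x0 ∈ Icc (0:ℝ) 1) {y y' : ℝ → ℂ}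
    (sol : IsSLSolution q (k^2) y y') :
    ∀ x ∈ Icc (0:ℝ) 1,
      (y x = y x0 * Complex.cos (k * ((x:ℂ) - (x0:ℂ)))
          + y' x0 * Complex.sin (k * ((x:ℂ) - (x0:ℂ))) / k
          + (∫ t in x0..x, Complex.sin (k * ((x:ℂ) - (t:ℂ))) / k * (q t : ℂ) * y t)) ∧
      (y' x = -(y x0 * k * Complex.sin (k * ((x:ℂ) - (x0:ℂ))))
          + y' x0 * Complex.cos (k * ((x:ℂ) - (x0:ℂ)))
          + (∫ t in x0..x, Complex.cos (k * ((x:ℂ) - (t:ℂ))) * (q t : ℂ) * y t)) := by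
  have hycont : ContinuousOn y (Icc 0 1) := fun t ht => (sol.1 t ht).continuousWithinAt
  have hqyc : ContinuousOn (fun t => (q t : ℂ) * y t) (Icc 0 1) :=
    (Complex.continuous_ofReal.comp_continuousOn hqc).mul hycont
  set c : ℂ := (x0 : ℂ) with hc
  have hcosc : Continuous fun t : ℝ => Complex.cos (k * ((t:ℂ) - c)) := by
    apply Complex.continuous_cos.comp
    exact (continuous_const.mul (Complex.continuous_ofReal.sub continuous_const))
  have hsinc : Continuous fun t : ℝ => Complex.sin (k * ((t:ℂ) - c)) := by
    apply Complex.continuous_sin.comp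
    exact (continuous_const.mul (Complex.continuous_ofReal.sub continuous_const))
  set Pf : ℝ → ℂ := fun t => Complex.cos (k * ((t:ℂ) - c)) * ((q t : ℂ) * y t) with hPf
  set Qf : ℝ → ℂ := fun t => Complex.sin (k * ((t:ℂ) - c)) * ((q t : ℂ) * y t) with hQf
  have hPfc : ContinuousOn Pf (Icc 0 1) := hcosc.continuousOn.mul hqyc
  have hQfc : ContinuousOn Qf (Icc 0 1) := hsinc.continuousOn.mul hqyc
  set P : ℝ → ℂ := fun x => ∫ t in x0..x, Pf t with hPdef
  set Qi : ℝ → ℂ := fun x => ∫ t in x0..x, Qf t with hQdef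
  have hP : ∀ x ∈ Icc (0:ℝ) 1, HasDerivWithinAt P (Pf x) (Icc 0 1) x :=
    fun x hx => ftc_icc hPfc hx0 hx
  have hQ : ∀ x ∈ Icc (0:ℝ) 1, HasDerivWithinAt Qi (Qf x) (Icc 0 1) x :=
    fun x hx => ftc_icc hQfc hx0 hx
  set a : ℂ := y x0 with ha
  set b : ℂ := y' x0 with hb
  set G : ℝ → ℂ := fun x => k * y x - k * a * Complex.cos (k * ((x:ℂ) - c))
      - b * Complex.sin (k * ((x:ℂ) - c))
      - Complex.sin (k * ((x:ℂ) - c)) * P x + Complex.cos (k * ((x:ℂ) - c)) * Qi x with hG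
  set G1 : ℝ → ℂ := fun x => k * y' x + a * k^2 * Complex.sin (k * ((x:ℂ) - c))
      - b * k * Complex.cos (k * ((x:ℂ) - c))
      - k * (Complex.cos (k * ((x:ℂ) - c)) * P x)
      - k * (Complex.sin (k * ((x:ℂ) - c)) * Qi x) with hG1
  have hg : ∀ x ∈ Icc (0:ℝ) 1, HasDerivWithinAt G (G1 x) (Icc 0 1) x := by
    intro x hx
    have hD := (((((sol.1 x hx).const_mul k).sub
        (((hd_cos k c x).hasDerivWithinAt).const_mul (k*a))).sub
        (((hd_sin k c x).hasDerivWithinAt).const_mul b)).sub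
        (((hd_sin k c x).hasDerivWithinAt).mul (hP x hx))).add
        (((hd_cos k c x).hasDerivWithinAt).mul (hQ x hx))
    refine hD.congr_deriv (Eq.symm ?_)
    simp only [G1, Pf, Qf]
    ring
  have hg1 : ∀ x ∈ Icc (0:ℝ) 1, HasDerivWithinAt G1 (-(k^2) * G x) (Icc 0 1) x := by
    intro x hx
    have hD := (((((sol.2 x hx).const_mul k).add
        (((hd_sin k c x).hasDerivWithinAt).const_mul (a*k^2))).sub
        (((hd_cos k c x).hasDerivWithinAt).const_mul (b*k))).sub
        ((((hd_cos k c x).hasDerivWithinAt).mul (hP x hx)).const_mul k)).sub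
        ((((hd_sin k c x).hasDerivWithinAt).mul (hQ x hx)).const_mul k)
    refine hD.congr_deriv (Eq.symm ?_)
    simp only [G, G1, Pf, Qf]
    have pyth := Complex.cos_sq_add_sin_sq (k * ((x:ℂ) - c))
    linear_combination (k * ((q x : ℂ) * y x)) * pyth
  set p : ℝ → ℂ := fun x => G1 x + Complex.I * k * G x with hpdef
  have hp : ∀ x ∈ Icc (0:ℝ) 1, HasDerivWithinAt p (Complex.I * k * p x) (Icc 0 1) x := by
    intro x hx
    have hD := (hg1 x hx).add ((hg x hx).const_mul (Complex.I * k))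
    refine hD.congr_deriv (Eq.symm ?_)
    simp only [p]
    linear_combination (k^2 * G x) * Complex.I_sq
  have hr : ∀ x ∈ Icc (0:ℝ) 1, HasDerivWithinAt
      (fun u : ℝ => Complex.exp (-(Complex.I*k) * (u:ℂ)) * p u) 0 (Icc 0 1) x := by
    intro x hx
    have hD := ((hd_cexp (-(Complex.I*k)) x).hasDerivWithinAt).mul (hp x hx)
    have hval : -(Complex.I*k) * Complex.exp (-(Complex.I*k) * (x:ℂ)) * p x
        + Complex.exp (-(Complex.I*k) * (x:ℂ)) * (Complex.I * k * p x) = 0 := by ring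
    exact hval ▸ hD
  have hr0 := const_of_deriv_zero hr
  have hGx0 : G x0 = 0 := by
    have e0 : k * ((x0:ℂ) - c) = 0 := by simp [hc]
    simp only [hG, ha, hb, hPdef, hQdef, e0, Complex.cos_zero, Complex.sin_zero,
      intervalIntegral.integral_same]
    ring
  have hG1x0 : G1 x0 = 0 := by
    have e0 : k * ((x0:ℂ) - c) = 0 := by simp [hc]
    simp only [hG1, ha, hb, hPdef, hQdef, e0, Complex.cos_zero, Complex.sin_zero,
      intervalIntegral.integral_same]
    ring
  have hpx0 : p x0 = 0 := by simp [hpdef, hGx0, hG1x0]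
  have hpzero : ∀ x ∈ Icc (0:ℝ) 1, p x = 0 := by
    intro x hx
    have h1 := hr0 x hx
    have h2 := hr0 x0 hx0
    rw [hpx0, mul_zero] at h2
    rw [← h2] at h1
    exact (mul_eq_zero.mp h1).resolve_left (Complex.exp_ne_zero _)
  have hs : ∀ x ∈ Icc (0:ℝ) 1, HasDerivWithinAt
      (fun u : ℝ => Complex.exp ((Complex.I*k) * (u:ℂ)) * G u) 0 (Icc 0 1) x := by
    intro x hx
    have hD := ((hd_cexp (Complex.I*k) x).hasDerivWithinAt).mul (hg x hx)
    have hpx := hpzero x hx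
    simp only [hpdef] at hpx
    have hval : (Complex.I*k) * Complex.exp ((Complex.I*k) * (x:ℂ)) * G x
        + Complex.exp ((Complex.I*k) * (x:ℂ)) * G1 x = 0 := by
      linear_combination (Complex.exp ((Complex.I*k) * (x:ℂ))) * hpx
    exact hval ▸ hD
  have hs0 := const_of_deriv_zero hs
  have hGzero : ∀ x ∈ Icc (0:ℝ) 1, G x = 0 := by
    intro x hx
    have h1 := hs0 x hx
    have h2 := hs0 x0 hx0
    rw [hGx0, mul_zero] at h2
    rw [← h2] at h1
    exact (mul_eq_zero.mp h1).resolve_left (Complex.exp_ne_zero _)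
  have hG1zero : ∀ x ∈ Icc (0:ℝ) 1, G1 x = 0 := by
    intro x hx
    have hpx := hpzero x hx
    simp only [hpdef, hGzero x hx, mul_zero, add_zero] at hpx
    exact hpx
  intro x hx
  have hsub : uIcc x0 x ⊆ Icc (0:ℝ) 1 := uIcc_subset_Icc hx0 hx
  have hintP : IntervalIntegrable Pf MeasureTheory.volume x0 x :=
    (hPfc.mono hsub).intervalIntegrable
  have hintQ : IntervalIntegrable Qf MeasureTheory.volume x0 x :=
    (hQfc.mono hsub).intervalIntegrable
  constructor
  · have hint_eq : (∫ t in x0..x, Complex.sin (k * ((x:ℂ) - (t:ℂ))) / k * (q t : ℂ) * y t)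
        = Complex.sin (k * ((x:ℂ) - c)) / k * P x - Complex.cos (k * ((x:ℂ) - c)) / k * Qi x := by
      rw [hPdef, hQdef, ← intervalIntegral.integral_const_mul, ← intervalIntegral.integral_const_mul,
        ← intervalIntegral.integral_sub (hintP.const_mul _) (hintQ.const_mul _)]
      apply intervalIntegral.integral_congr
      intro t _
      have harg : k * ((x:ℂ) - (t:ℂ)) = k * ((x:ℂ) - c) - k * ((t:ℂ) - c) := by ring
      beta_reduce
      rw [harg, Complex.sin_sub]
      simp only [hPf, hQf]
      ring
    rw [hint_eq]
    have hGx := hGzero x hx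
    simp only [hG, ha, hb] at hGx
    field_simp
    linear_combination hGx
  · have hint_eq : (∫ t in x0..x, Complex.cos (k * ((x:ℂ) - (t:ℂ))) * (q t : ℂ) * y t)
        = Complex.cos (k * ((x:ℂ) - c)) * P x + Complex.sin (k * ((x:ℂ) - c)) * Qi x := by
      rw [hPdef, hQdef, ← intervalIntegral.integral_const_mul, ← intervalIntegral.integral_const_mul,
        ← intervalIntegral.integral_add (hintP.const_mul _) (hintQ.const_mul _)]
      apply intervalIntegral.integral_congr
      intro t _
      have harg : k * ((x:ℂ) - (t:ℂ)) = k * ((x:ℂ) - c) - k * ((t:ℂ) - c) := by ring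
      beta_reduce
      rw [harg, Complex.cos_sub]
      simp only [hPf, hQf]
      ring
    rw [hint_eq]
    have hGx := hG1zero x hx
    simp only [hG1, ha, hb] at hGx
    have : k * y' x = k * (-(y x0 * k * Complex.sin (k * ((x:ℂ) - c)))
        + y' x0 * Complex.cos (k * ((x:ℂ) - c))
        + (Complex.cos (k * ((x:ℂ) - c)) * P x + Complex.sin (k * ((x:ℂ) - c)) * Qi x)) := by
      linear_combination hGx
    exact mul_left_cancel₀ hk this

lemma abs_split {x0 x t : ℝ} (ht : t ∈ uIcc x0 x) : |x - t| + |t - x0| = |x - x0| := by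
  rw [uIcc, mem_Icc] at ht
  rcases le_total x0 x with h | h
  · rw [min_eq_left h, max_eq_right h] at ht
    rw [abs_of_nonneg (by linarith [ht.1, ht.2]), abs_of_nonneg (by linarith [ht.1]),
      abs_of_nonneg (by linarith)]
    ring
  · rw [min_eq_right h, max_eq_left h] at ht
    rw [abs_of_nonpos (by linarith [ht.1, ht.2]), abs_of_nonpos (by linarith [ht.1]),
      abs_of_nonpos (by linarith)]
    ring

lemma norm_int_le {f : ℝ → ℂ} {x0 x : ℝ} (h01 : |x - x0| ≤ 1) {C : ℝ} (h0 : 0 ≤ C)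
    (hC : ∀ t ∈ Set.uIoc x0 x, ‖f t‖ ≤ C) : ‖∫ t in x0..x, f t‖ ≤ C := by
  refine le_trans (intervalIntegral.norm_integral_le_of_norm_le_const hC) ?_
  nlinarith

lemma crude {q : ℝ → ℝ} (hqc : ContinuousOn q (Icc 0 1)) {k : ℂ} {A : ℝ}
    (hA : ∀ t ∈ Icc (0:ℝ) 1, |q t| ≤ A) (hk1 : 1 ≤ ‖k‖) (hk2 : 2*A ≤ ‖k‖)
    {x0 : ℝ} (hx0 : x0 ∈ Icc (0:ℝ) 1) {y y' : ℝ → ℂ} (sol : IsSLSolution q (k^2) y y') :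
    ∀ x ∈ Icc (0:ℝ) 1, ‖y x‖ ≤ 2*(‖y x0‖ + ‖y' x0‖/‖k‖) * Real.exp (|k.im| * |x - x0|) := by
  have hkpos : (0:ℝ) < ‖k‖ := lt_of_lt_of_le one_pos hk1
  have hk : k ≠ 0 := by simpa using (norm_pos_iff.mp hkpos)
  have hA0 : 0 ≤ A := le_trans (abs_nonneg _) (hA 0 ⟨le_refl _, zero_le_one⟩)
  set τ := |k.im| with hτ
  have hycont : ContinuousOn y (Icc 0 1) := fun t ht => (sol.1 t ht).continuousWithinAt
  set c : ℝ := ‖y x0‖ + ‖y' x0‖/‖k‖ with hcdef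
  have hc0 : 0 ≤ c := add_nonneg (norm_nonneg _) (div_nonneg (norm_nonneg _) hkpos.le)
  set u : ℝ → ℝ := fun x => ‖y x‖ * Real.exp (-(τ * |x - x0|)) with hu
  have hucont : ContinuousOn u (Icc 0 1) := by
    apply hycont.norm.mul
    exact (Real.continuous_exp.comp
      ((continuous_const.mul ((continuous_id.sub continuous_const).abs)).neg)).continuousOn
  obtain ⟨z, hz, hmax⟩ := isCompact_Icc.exists_isMaxOn (nonempty_Icc.mpr zero_le_one)
    hucont
  set N := u z with hN
  have hN0 : 0 ≤ N := mul_nonneg (norm_nonneg _) (Real.exp_pos _).le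
  have hbound : ∀ t, t ∈ Icc (0:ℝ) 1 → ‖y t‖ ≤ N * Real.exp (τ * |t - x0|) := by
    intro t ht
    have h1 : u t ≤ N := hmax ht
    have : ‖y t‖ = u t * Real.exp (τ * |t - x0|) := by
      rw [hu]
      simp only
      rw [mul_assoc, ← Real.exp_add, neg_add_cancel, Real.exp_zero, mul_one]
    rw [this]
    exact mul_le_mul_of_nonneg_right h1 (Real.exp_pos _).le
  have habs1 : ∀ w ∈ Icc (0:ℝ) 1, |w - x0| ≤ 1 := by
    intro w hw
    rw [abs_sub_le_iff]
    constructor <;> [linarith [hw.2, hx0.1]; linarith [hw.1, hx0.2]]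
  have key : ∀ x ∈ Icc (0:ℝ) 1, ‖y x‖ ≤ (c + A*N/‖k‖) * Real.exp (τ * |x - x0|) := by
    intro x hx
    have hrep := (rep hqc hk hx0 sol x hx).1
    rw [hrep]
    have hIb : ‖∫ t in x0..x, Complex.sin (k * ((x:ℂ) - (t:ℂ)))/k * (q t : ℂ) * y t‖
        ≤ A*N/‖k‖ * Real.exp (τ * |x - x0|) := by
      apply norm_int_le (habs1 x hx)
      · positivity
      · intro t ht
        have htu : t ∈ uIcc x0 x := Ioc_subset_Icc_self ht
        have ht01 : t ∈ Icc (0:ℝ) 1 := uIcc_subset_Icc hx0 hx htu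
        have e1 : ‖Complex.sin (k * ((x:ℂ) - (t:ℂ)))‖ ≤ Real.exp (τ * |x - t|) := by
          have : ((x:ℂ) - (t:ℂ)) = ((x - t : ℝ) : ℂ) := by push_cast; ring
          rw [this]; exact norm_sin_mul k (x - t)
        have e2 : |q t| ≤ A := hA t ht01
        have e3 : ‖y t‖ ≤ N * Real.exp (τ * |t - x0|) := hbound t ht01
        calc ‖Complex.sin (k * ((x:ℂ) - (t:ℂ)))/k * (q t : ℂ) * y t‖
            = ‖Complex.sin (k * ((x:ℂ) - (t:ℂ)))‖/‖k‖ * |q t| * ‖y t‖ := by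
              rw [norm_mul, norm_mul, norm_div, Complex.norm_real, Real.norm_eq_abs]
          _ ≤ Real.exp (τ * |x - t|)/‖k‖ * A * (N * Real.exp (τ * |t - x0|)) := by
              gcongr
          _ = A*N/‖k‖ * (Real.exp (τ * |x - t|) * Real.exp (τ * |t - x0|)) := by ring
          _ = A*N/‖k‖ * Real.exp (τ * (|x - t| + |t - x0|)) := by
              rw [← Real.exp_add]; ring_nf
          _ = A*N/‖k‖ * Real.exp (τ * |x - x0|) := by rw [abs_split htu]
    have e4 : ‖y x0 * Complex.cos (k * ((x:ℂ) - (x0:ℂ)))‖ ≤ ‖y x0‖ * Real.exp (τ * |x - x0|) := by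
      rw [norm_mul]
      have : ((x:ℂ) - (x0:ℂ)) = ((x - x0 : ℝ) : ℂ) := by push_cast; ring
      rw [this]
      exact mul_le_mul_of_nonneg_left (norm_cos_mul k (x - x0)) (norm_nonneg _)
    have e5 : ‖y' x0 * Complex.sin (k * ((x:ℂ) - (x0:ℂ)))/k‖
        ≤ ‖y' x0‖/‖k‖ * Real.exp (τ * |x - x0|) := by
      rw [norm_div, norm_mul]
      have : ((x:ℂ) - (x0:ℂ)) = ((x - x0 : ℝ) : ℂ) := by push_cast; ring
      rw [this, div_mul_eq_mul_div]
      gcongr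
      exact norm_sin_mul k (x - x0)
    calc ‖y x0 * Complex.cos (k * ((x:ℂ) - (x0:ℂ)))
          + y' x0 * Complex.sin (k * ((x:ℂ) - (x0:ℂ)))/k
          + (∫ t in x0..x, Complex.sin (k * ((x:ℂ) - (t:ℂ)))/k * (q t : ℂ) * y t)‖
        ≤ ‖y x0 * Complex.cos (k * ((x:ℂ) - (x0:ℂ)))‖
          + ‖y' x0 * Complex.sin (k * ((x:ℂ) - (x0:ℂ)))/k‖
          + ‖∫ t in x0..x, Complex.sin (k * ((x:ℂ) - (t:ℂ)))/k * (q t : ℂ) * y t‖ :=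
          norm_add₃_le
      _ ≤ ‖y x0‖ * Real.exp (τ * |x - x0|) + ‖y' x0‖/‖k‖ * Real.exp (τ * |x - x0|)
          + A*N/‖k‖ * Real.exp (τ * |x - x0|) := by gcongr
      _ = (c + A*N/‖k‖) * Real.exp (τ * |x - x0|) := by rw [hcdef]; ring
  -- N ≤ 2c
  have hNle : N ≤ c + A*N/‖k‖ := by
    have h1 := key z hz
    have h2 : N = ‖y z‖ * Real.exp (-(τ * |z - x0|)) := rfl
    have h3 : ‖y z‖ * Real.exp (-(τ * |z - x0|))
        ≤ (c + A*N/‖k‖) * Real.exp (τ * |z - x0|) * Real.exp (-(τ * |z - x0|)) :=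
      mul_le_mul_of_nonneg_right h1 (Real.exp_pos _).le
    rw [mul_assoc, ← Real.exp_add, add_neg_cancel, Real.exp_zero, mul_one] at h3
    rw [h2]; exact h3
  have hN2c : N ≤ 2*c := by
    have h5 : A*N/‖k‖ ≤ N/2 := by
      rw [div_le_div_iff₀ hkpos two_pos]
      nlinarith
    clear_value N c
    linarith
  intro x hx
  calc ‖y x‖ ≤ N * Real.exp (τ * |x - x0|) := hbound x hx
    _ ≤ 2*c * Real.exp (τ * |x - x0|) :=
        mul_le_mul_of_nonneg_right hN2c (Real.exp_pos _).le

lemma habs1' {x0 : ℝ} (hx0 : x0 ∈ Icc (0:ℝ) 1) : ∀ w ∈ Icc (0:ℝ) 1, |w - x0| ≤ 1 := by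
  intro w hw
  rw [abs_sub_le_iff]
  constructor <;> [linarith [hw.2, hx0.1]; linarith [hw.1, hx0.2]]

lemma first_order {q : ℝ → ℝ} (hqc : ContinuousOn q (Icc 0 1)) {k : ℂ} {A : ℝ}
    (hA : ∀ t ∈ Icc (0:ℝ) 1, |q t| ≤ A) (hk1 : 1 ≤ ‖k‖) (hk2 : 2*A ≤ ‖k‖)
    {x0 : ℝ} (hx0 : x0 ∈ Icc (0:ℝ) 1) {y y' : ℝ → ℂ} (sol : IsSLSolution q (k^2) y y') :
    ∀ x ∈ Icc (0:ℝ) 1,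
      ‖y x - y x0 * Complex.cos (k * ((x:ℂ) - (x0:ℂ)))
        - y' x0 * Complex.sin (k * ((x:ℂ) - (x0:ℂ)))/k‖
        ≤ 2*A*(‖y x0‖ + ‖y' x0‖/‖k‖)/‖k‖ * Real.exp (|k.im| * |x - x0|) := by
  have hkpos : (0:ℝ) < ‖k‖ := lt_of_lt_of_le one_pos hk1
  have hk : k ≠ 0 := by simpa using (norm_pos_iff.mp hkpos)
  have hA0 : 0 ≤ A := le_trans (abs_nonneg _) (hA 0 ⟨le_refl _, zero_le_one⟩)
  set τ := |k.im| with hτ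
  set c : ℝ := ‖y x0‖ + ‖y' x0‖/‖k‖ with hcdef
  have hc0 : 0 ≤ c := add_nonneg (norm_nonneg _) (div_nonneg (norm_nonneg _) hkpos.le)
  have hcr := crude hqc hA hk1 hk2 hx0 sol
  intro x hx
  have hrep := (rep hqc hk hx0 sol x hx).1
  have heq : y x - y x0 * Complex.cos (k * ((x:ℂ) - (x0:ℂ)))
      - y' x0 * Complex.sin (k * ((x:ℂ) - (x0:ℂ)))/k
      = ∫ t in x0..x, Complex.sin (k * ((x:ℂ) - (t:ℂ)))/k * (q t : ℂ) * y t := by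
    rw [hrep]; ring
  rw [heq]
  apply norm_int_le (habs1' hx0 x hx) (by positivity)
  intro t ht
  have htu : t ∈ uIcc x0 x := Ioc_subset_Icc_self ht
  have ht01 : t ∈ Icc (0:ℝ) 1 := uIcc_subset_Icc hx0 hx htu
  have e1 : ‖Complex.sin (k * ((x:ℂ) - (t:ℂ)))‖ ≤ Real.exp (τ * |x - t|) := by
    have : ((x:ℂ) - (t:ℂ)) = ((x - t : ℝ) : ℂ) := by push_cast; ring
    rw [this]; exact norm_sin_mul k (x - t)
  calc ‖Complex.sin (k * ((x:ℂ) - (t:ℂ)))/k * (q t : ℂ) * y t‖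
      = ‖Complex.sin (k * ((x:ℂ) - (t:ℂ)))‖/‖k‖ * |q t| * ‖y t‖ := by
        rw [norm_mul, norm_mul, norm_div, Complex.norm_real, Real.norm_eq_abs]
    _ ≤ Real.exp (τ * |x - t|)/‖k‖ * A * (2*c * Real.exp (τ * |t - x0|)) := by
        gcongr
        · exact hA t ht01
        · exact hcr t ht01
    _ = 2*A*c/‖k‖ * (Real.exp (τ * |x - t|) * Real.exp (τ * |t - x0|)) := by ring
    _ = 2*A*c/‖k‖ * Real.exp (τ * (|x - t| + |t - x0|)) := by
        rw [← Real.exp_add]; ring_nf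
    _ = 2*A*c/‖k‖ * Real.exp (τ * |x - x0|) := by rw [abs_split htu]

lemma deriv_first_order {q : ℝ → ℝ} (hqc : ContinuousOn q (Icc 0 1)) {k : ℂ} {A : ℝ}
    (hA : ∀ t ∈ Icc (0:ℝ) 1, |q t| ≤ A) (hk1 : 1 ≤ ‖k‖) (hk2 : 2*A ≤ ‖k‖)
    {x0 : ℝ} (hx0 : x0 ∈ Icc (0:ℝ) 1) {y y' : ℝ → ℂ} (sol : IsSLSolution q (k^2) y y') :
    ∀ x ∈ Icc (0:ℝ) 1,
      ‖y' x - (-(y x0 * k * Complex.sin (k * ((x:ℂ) - (x0:ℂ))))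
        + y' x0 * Complex.cos (k * ((x:ℂ) - (x0:ℂ))))‖
        ≤ 2*A*(‖y x0‖ + ‖y' x0‖/‖k‖) * Real.exp (|k.im| * |x - x0|) := by
  have hkpos : (0:ℝ) < ‖k‖ := lt_of_lt_of_le one_pos hk1
  have hk : k ≠ 0 := by simpa using (norm_pos_iff.mp hkpos)
  have hA0 : 0 ≤ A := le_trans (abs_nonneg _) (hA 0 ⟨le_refl _, zero_le_one⟩)
  set τ := |k.im| with hτ
  set c : ℝ := ‖y x0‖ + ‖y' x0‖/‖k‖ with hcdef
  have hc0 : 0 ≤ c := add_nonneg (norm_nonneg _) (div_nonneg (norm_nonneg _) hkpos.le)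
  have hcr := crude hqc hA hk1 hk2 hx0 sol
  intro x hx
  have hrep := (rep hqc hk hx0 sol x hx).2
  have heq : y' x - (-(y x0 * k * Complex.sin (k * ((x:ℂ) - (x0:ℂ))))
      + y' x0 * Complex.cos (k * ((x:ℂ) - (x0:ℂ))))
      = ∫ t in x0..x, Complex.cos (k * ((x:ℂ) - (t:ℂ))) * (q t : ℂ) * y t := by
    rw [hrep]; ring
  rw [heq]
  apply norm_int_le (habs1' hx0 x hx) (by positivity)
  intro t ht
  have htu : t ∈ uIcc x0 x := Ioc_subset_Icc_self ht
  have ht01 : t ∈ Icc (0:ℝ) 1 := uIcc_subset_Icc hx0 hx htu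
  have e1 : ‖Complex.cos (k * ((x:ℂ) - (t:ℂ)))‖ ≤ Real.exp (τ * |x - t|) := by
    have : ((x:ℂ) - (t:ℂ)) = ((x - t : ℝ) : ℂ) := by push_cast; ring
    rw [this]; exact norm_cos_mul k (x - t)
  calc ‖Complex.cos (k * ((x:ℂ) - (t:ℂ))) * (q t : ℂ) * y t‖
      = ‖Complex.cos (k * ((x:ℂ) - (t:ℂ)))‖ * |q t| * ‖y t‖ := by
        rw [norm_mul, norm_mul, Complex.norm_real, Real.norm_eq_abs]
    _ ≤ Real.exp (τ * |x - t|) * A * (2*c * Real.exp (τ * |t - x0|)) := by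
        gcongr
        · exact hA t ht01
        · exact hcr t ht01
    _ = 2*A*c * (Real.exp (τ * |x - t|) * Real.exp (τ * |t - x0|)) := by ring
    _ = 2*A*c * Real.exp (τ * (|x - t| + |t - x0|)) := by
        rw [← Real.exp_add]; ring_nf
    _ = 2*A*c * Real.exp (τ * |x - x0|) := by rw [abs_split htu]

lemma hd_sin2 (k : ℂ) (x : ℝ) :
    HasDerivAt (fun t : ℝ => Complex.sin (k * ((1:ℂ) - 2*(t:ℂ))))
      (-(2*k) * Complex.cos (k * ((1:ℂ) - 2*(x:ℂ)))) x := by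
  have h : HasDerivAt (fun z : ℂ => Complex.sin (k * ((1:ℂ) - 2*z)))
      (Complex.cos (k * ((1:ℂ) - 2*(x:ℂ))) * (k * (-2))) (x:ℂ) := by
    have inner : HasDerivAt (fun z : ℂ => k * ((1:ℂ) - 2*z)) (k * (-2)) (x:ℂ) := by
      have h0 : HasDerivAt (fun z : ℂ => (1:ℂ) - 2*z) (-2) (x:ℂ) := by
        simpa using ((hasDerivAt_id ((x:ℂ))).const_mul (2:ℂ)).const_sub 1
      simpa using h0.const_mul k
    exact (Complex.hasDerivAt_sin _).comp _ inner
  have := h.comp_ofReal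
  convert this using 1; ring

lemma norm_sin_le_exp {k : ℂ} {r : ℝ} (hr : |r| ≤ 1) :
    ‖Complex.sin (k * (r:ℂ))‖ ≤ Real.exp |k.im| := by
  refine le_trans (norm_sin_mul k r) (Real.exp_le_exp.2 ?_)
  calc |k.im| * |r| ≤ |k.im| * 1 := by gcongr
    _ = |k.im| := mul_one _

lemma norm_cos_le_exp {k : ℂ} {r : ℝ} (hr : |r| ≤ 1) :
    ‖Complex.cos (k * (r:ℂ))‖ ≤ Real.exp |k.im| := by
  refine le_trans (norm_cos_mul k r) (Real.exp_le_exp.2 ?_)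
  calc |k.im| * |r| ≤ |k.im| * 1 := by gcongr
    _ = |k.im| := mul_one _

lemma wronskian {q : ℝ → ℝ} {k : ℂ} {C C' S S' : ℝ → ℂ}
    (solC : IsSLSolution q (k^2) C C') (solS : IsSLSolution q (k^2) S S')
    (hC0 : C 0 = 1) (hC'0 : C' 0 = 0) (hS0 : S 0 = 0) (hS'0 : S' 0 = 1) :
    ∀ x ∈ Icc (0:ℝ) 1, C x * S' x - C' x * S x = 1 := by
  have hconst : ∀ x ∈ Icc (0:ℝ) 1, C x * S' x - C' x * S x = C 0 * S' 0 - C' 0 * S 0 := by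
    apply const_of_deriv_zero
    intro x hx
    have hD := ((solC.1 x hx).mul (solS.2 x hx)).sub ((solC.2 x hx).mul (solS.1 x hx))
    have hval : C' x * S' x + C x * (((q x : ℂ) - k^2) * S x)
        - ((((q x : ℂ) - k^2) * C x) * S x + C' x * S' x) = 0 := by ring
    exact hval ▸ hD
  intro x hx
  rw [hconst x hx, hC0, hC'0, hS0, hS'0]
  ring

lemma second_order {q : ℝ → ℝ} (hq : ContDiffOn ℝ 1 q (Icc 0 1)) {k : ℂ} {A B : ℝ}
    (hA : ∀ t ∈ Icc (0:ℝ) 1, |q t| ≤ A)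
    (hB : ∀ t ∈ Icc (0:ℝ) 1, |derivWithin q (Icc 0 1) t| ≤ B)
    (hk1 : 1 ≤ ‖k‖) (hk2 : 2*A ≤ ‖k‖)
    {y y' : ℝ → ℂ} (sol : IsSLSolution q (k^2) y y') (hy0 : y 0 = 1) (hy'0 : y' 0 = 0) :
    ‖y' 1 - (-(k * Complex.sin k) + (((1/2) * ∫ t in (0:ℝ)..1, q t : ℝ) : ℂ) * Complex.cos k)‖
      ≤ (2*A^2 + A + B) / ‖k‖ * Real.exp |k.im| := by
  have hqc : ContinuousOn q (Icc 0 1) := hq.continuousOn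
  have hkpos : (0:ℝ) < ‖k‖ := lt_of_lt_of_le one_pos hk1
  have hk : k ≠ 0 := by simpa using (norm_pos_iff.mp hkpos)
  have hA0 : 0 ≤ A := le_trans (abs_nonneg _) (hA 0 ⟨le_refl _, zero_le_one⟩)
  have hB0 : 0 ≤ B := le_trans (abs_nonneg _) (hB 0 ⟨le_refl _, zero_le_one⟩)
  set τ := |k.im| with hτ
  have hτ0 : 0 ≤ τ := abs_nonneg _
  have h0m : (0:ℝ) ∈ Icc (0:ℝ) 1 := ⟨le_refl _, zero_le_one⟩
  have h1m : (1:ℝ) ∈ Icc (0:ℝ) 1 := ⟨zero_le_one, le_refl _⟩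
  have hycont : ContinuousOn y (Icc 0 1) := fun t ht => (sol.1 t ht).continuousWithinAt
  -- the representation of y' at 1
  have hrep := (rep hqc hk h0m sol 1 h1m).2
  rw [hy0, hy'0] at hrep
  have harg : k * (((1:ℝ):ℂ) - ((0:ℝ):ℂ)) = k := by norm_num
  rw [harg] at hrep
  simp only [one_mul, zero_mul, add_zero, zero_add] at hrep
  -- split the integral
  set f1 : ℝ → ℂ := fun t => Complex.cos (k * (((1:ℝ):ℂ) - (t:ℂ))) * (q t : ℂ)
      * Complex.cos (k * ((t:ℂ) - ((0:ℝ):ℂ))) with hf1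
  set f2 : ℝ → ℂ := fun t => Complex.cos (k * (((1:ℝ):ℂ) - (t:ℂ))) * (q t : ℂ)
      * (y t - Complex.cos (k * ((t:ℂ) - ((0:ℝ):ℂ)))) with hf2
  have hcos1c : Continuous fun t : ℝ => Complex.cos (k * (((1:ℝ):ℂ) - (t:ℂ))) :=
    Complex.continuous_cos.comp (continuous_const.mul (continuous_const.sub Complex.continuous_ofReal))
  have hcos0c : Continuous fun t : ℝ => Complex.cos (k * ((t:ℂ) - ((0:ℝ):ℂ))) :=
    Complex.continuous_cos.comp (continuous_const.mul (Complex.continuous_ofReal.sub continuous_const))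
  have hqCc : ContinuousOn (fun t : ℝ => ((q t : ℂ))) (Icc 0 1) :=
    Complex.continuous_ofReal.comp_continuousOn hqc
  have hf1c : ContinuousOn f1 (Icc 0 1) :=
    ((hcos1c.continuousOn.mul hqCc).mul hcos0c.continuousOn)
  have hf2c : ContinuousOn f2 (Icc 0 1) :=
    ((hcos1c.continuousOn.mul hqCc).mul (hycont.sub hcos0c.continuousOn))
  have hsub01 : uIcc (0:ℝ) 1 ⊆ Icc (0:ℝ) 1 := uIcc_subset_Icc h0m h1m
  have hint1 : IntervalIntegrable f1 MeasureTheory.volume 0 1 := (hf1c.mono hsub01).intervalIntegrable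
  have hint2 : IntervalIntegrable f2 MeasureTheory.volume 0 1 := (hf2c.mono hsub01).intervalIntegrable
  have hsplit : (∫ t in (0:ℝ)..1, Complex.cos (k * (((1:ℝ):ℂ) - (t:ℂ))) * (q t : ℂ) * y t)
      = (∫ t in (0:ℝ)..1, f1 t) + (∫ t in (0:ℝ)..1, f2 t) := by
    rw [← intervalIntegral.integral_add hint1 hint2]
    apply intervalIntegral.integral_congr
    intro t _
    simp only [hf1, hf2]
    ring
  -- bound on ∫ f2
  have hf2b : ‖∫ t in (0:ℝ)..1, f2 t‖ ≤ 2*A^2/‖k‖ * Real.exp τ := by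
    have hfo := first_order hqc hA hk1 hk2 h0m sol
    apply norm_int_le (by norm_num) (by positivity)
    intro t ht
    have htu : t ∈ uIcc (0:ℝ) 1 := Ioc_subset_Icc_self ht
    have ht01 : t ∈ Icc (0:ℝ) 1 := hsub01 htu
    have e1 : ‖Complex.cos (k * (((1:ℝ):ℂ) - (t:ℂ)))‖ ≤ Real.exp (τ * |1 - t|) := by
      have : (((1:ℝ):ℂ) - (t:ℂ)) = ((1 - t : ℝ) : ℂ) := by push_cast; ring
      rw [this]; exact norm_cos_mul k (1 - t)
    have e3 : ‖y t - Complex.cos (k * ((t:ℂ) - ((0:ℝ):ℂ)))‖ ≤ 2*A/‖k‖ * Real.exp (τ * |t|) := by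
      have h2 := hfo t ht01
      rw [hy0, hy'0] at h2
      calc ‖y t - Complex.cos (k * ((t:ℂ) - ((0:ℝ):ℂ)))‖
          = ‖y t - 1 * Complex.cos (k * ((t:ℂ) - ((0:ℝ):ℂ)))
            - 0 * Complex.sin (k * ((t:ℂ) - ((0:ℝ):ℂ)))/k‖ := by
            congr 1
            ring
        _ ≤ 2*A*(‖(1:ℂ)‖ + ‖(0:ℂ)‖/‖k‖)/‖k‖ * Real.exp (τ * |t - 0|) := h2
        _ = 2*A/‖k‖ * Real.exp (τ * |t|) := by simp
    calc ‖f2 t‖ = ‖Complex.cos (k * (((1:ℝ):ℂ) - (t:ℂ)))‖ * |q t|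
          * ‖y t - Complex.cos (k * ((t:ℂ) - ((0:ℝ):ℂ)))‖ := by
          rw [hf2]; simp only
          rw [norm_mul, norm_mul, Complex.norm_real, Real.norm_eq_abs]
      _ ≤ Real.exp (τ * |1 - t|) * A * (2*A/‖k‖ * Real.exp (τ * |t|)) := by
          gcongr
          exact hA t ht01
      _ = 2*A^2/‖k‖ * (Real.exp (τ * |1 - t|) * Real.exp (τ * |t|)) := by ring
      _ = 2*A^2/‖k‖ * Real.exp (τ * (|1 - t| + |t - 0|)) := by
          rw [← Real.exp_add]; ring_nf
      _ = 2*A^2/‖k‖ * Real.exp (τ * |1 - 0|) := by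
          rw [abs_split (by simpa using htu)]
      _ = 2*A^2/‖k‖ * Real.exp τ := by norm_num
  -- f1 via product-to-sum
  set q' : ℝ → ℝ := fun t => derivWithin q (Icc 0 1) t with hq'def
  have hq'c : ContinuousOn q' (Icc 0 1) := by
    rw [hq'def]
    exact hq.continuousOn_derivWithin (uniqueDiffOn_Icc one_pos) le_rfl
  set J : ℂ := ∫ t in (0:ℝ)..1, (q t : ℂ) * Complex.cos (k * ((1:ℂ) - 2*(t:ℂ))) with hJ
  have hf1eq : (∫ t in (0:ℝ)..1, f1 t)
      = (((1/2) * ∫ t in (0:ℝ)..1, q t : ℝ) : ℂ) * Complex.cos k + J/2 := by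
    have hcos2c : Continuous fun t : ℝ => Complex.cos (k * ((1:ℂ) - 2*(t:ℂ))) :=
      Complex.continuous_cos.comp (continuous_const.mul (continuous_const.sub
        (continuous_const.mul Complex.continuous_ofReal)))
    have hintq : IntervalIntegrable (fun t : ℝ => (q t : ℂ) * Complex.cos k)
        MeasureTheory.volume 0 1 := ((hqCc.mono hsub01).mul continuousOn_const).intervalIntegrable
    have hintj : IntervalIntegrable (fun t : ℝ => (q t : ℂ) * Complex.cos (k * ((1:ℂ) - 2*(t:ℂ))))
        MeasureTheory.volume 0 1 := ((hqCc.mono hsub01).mul hcos2c.continuousOn).intervalIntegrable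
    have step : (∫ t in (0:ℝ)..1, f1 t)
        = ((∫ t in (0:ℝ)..1, (q t : ℂ) * Complex.cos k)
          + (∫ t in (0:ℝ)..1, (q t : ℂ) * Complex.cos (k * ((1:ℂ) - 2*(t:ℂ)))))/2 := by
      rw [← intervalIntegral.integral_add hintq hintj]
      rw [show (∫ t in (0:ℝ)..1, ((q t : ℂ) * Complex.cos k
          + (q t : ℂ) * Complex.cos (k * ((1:ℂ) - 2*(t:ℂ)))))
          = ∫ t in (0:ℝ)..1, 2 * f1 t from ?_, intervalIntegral.integral_const_mul]
      · ring
      · apply intervalIntegral.integral_congr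
        intro t _
        have h1 := Complex.cos_add (k * (((1:ℝ):ℂ) - (t:ℂ))) (k * ((t:ℂ) - ((0:ℝ):ℂ)))
        have h2 := Complex.cos_sub (k * (((1:ℝ):ℂ) - (t:ℂ))) (k * ((t:ℂ) - ((0:ℝ):ℂ)))
        have e1 : k * (((1:ℝ):ℂ) - (t:ℂ)) + k * ((t:ℂ) - ((0:ℝ):ℂ)) = k := by push_cast; ring
        have e2 : k * (((1:ℝ):ℂ) - (t:ℂ)) - k * ((t:ℂ) - ((0:ℝ):ℂ)) = k * ((1:ℂ) - 2*(t:ℂ)) := by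
          push_cast; ring
        rw [e1] at h1
        rw [e2] at h2
        simp only [hf1]
        linear_combination ((q t : ℂ)) * h1 + ((q t : ℂ)) * h2
    rw [step, hJ]
    rw [intervalIntegral.integral_mul_const, intervalIntegral.integral_ofReal]
    push_cast
    ring
  -- IBP bound on J
  have hJb : ‖J‖ ≤ (2*A + B)/(2*‖k‖) * Real.exp τ := by
    set W : ℝ → ℂ := fun t => (q t : ℂ) * Complex.sin (k * ((1:ℂ) - 2*(t:ℂ))) with hW
    set W' : ℝ → ℂ := fun t => (q' t : ℂ) * Complex.sin (k * ((1:ℂ) - 2*(t:ℂ)))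
        + (q t : ℂ) * (-(2*k) * Complex.cos (k * ((1:ℂ) - 2*(t:ℂ)))) with hW'
    have hsin2c : Continuous fun t : ℝ => Complex.sin (k * ((1:ℂ) - 2*(t:ℂ))) :=
      Complex.continuous_sin.comp (continuous_const.mul (continuous_const.sub
        (continuous_const.mul Complex.continuous_ofReal)))
    have hcos2c : Continuous fun t : ℝ => Complex.cos (k * ((1:ℂ) - 2*(t:ℂ))) :=
      Complex.continuous_cos.comp (continuous_const.mul (continuous_const.sub
        (continuous_const.mul Complex.continuous_ofReal)))
    have hWcont : ContinuousOn W (Icc 0 1) := hqCc.mul hsin2c.continuousOn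
    have hW'cont : ContinuousOn W' (Icc 0 1) :=
      ((Complex.continuous_ofReal.comp_continuousOn hq'c).mul hsin2c.continuousOn).add
        (hqCc.mul (continuous_const.mul hcos2c).continuousOn)
    have hWd : ∀ x ∈ Ioo (0:ℝ) 1, HasDerivWithinAt W (W' x) (Ioi x) x := by
      intro x hx
      have hmem : Icc (0:ℝ) 1 ∈ 𝓝[Ioi x] x := mem_nhds_Ioi hx.1.le hx.2
      have hqd : HasDerivWithinAt q (q' x) (Icc 0 1) x :=
        ((hq.differentiableOn one_ne_zero) x ⟨hx.1.le, hx.2.le⟩).hasDerivWithinAt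
      have hqd2 : HasDerivWithinAt (fun t : ℝ => ((q t : ℂ))) ((q' x : ℂ)) (Ioi x) x := by
        have := Complex.ofRealCLM.hasFDerivAt.comp_hasDerivWithinAt x
          (hqd.mono_of_mem_nhdsWithin hmem)
        simpa [Function.comp_def] using this
      have htrig := (hd_sin2 k x).hasDerivWithinAt (s := Ioi x)
      have hD := hqd2.mul htrig
      exact hD
    have hintW' : IntervalIntegrable W' MeasureTheory.volume 0 1 :=
      (hW'cont.mono hsub01).intervalIntegrable
    have hftc := intervalIntegral.integral_eq_sub_of_hasDeriv_right_of_le zero_le_one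
      hWcont hWd hintW'
    -- ∫ W' = ∫ q' sin + (-(2k)) * J
    have hintA : IntervalIntegrable (fun t : ℝ => (q' t : ℂ) * Complex.sin (k * ((1:ℂ) - 2*(t:ℂ))))
        MeasureTheory.volume 0 1 :=
      ((Complex.continuous_ofReal.comp_continuousOn hq'c).mul hsin2c.continuousOn).mono hsub01
        |>.intervalIntegrable
    have hintB : IntervalIntegrable (fun t : ℝ => (q t : ℂ) * Complex.cos (k * ((1:ℂ) - 2*(t:ℂ))))
        MeasureTheory.volume 0 1 :=
      ((hqCc.mul hcos2c.continuousOn).mono hsub01).intervalIntegrable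
    have hWint : (∫ t in (0:ℝ)..1, W' t)
        = (∫ t in (0:ℝ)..1, (q' t : ℂ) * Complex.sin (k * ((1:ℂ) - 2*(t:ℂ)))) + (-(2*k)) * J := by
      rw [hJ, ← intervalIntegral.integral_const_mul]
      rw [← intervalIntegral.integral_add hintA (hintB.const_mul _)]
      apply intervalIntegral.integral_congr
      intro t _
      simp only [hW']
      ring
    have hJformula : J = ((∫ t in (0:ℝ)..1, (q' t : ℂ) * Complex.sin (k * ((1:ℂ) - 2*(t:ℂ))))
        - (W 1 - W 0)) / (2*k) := by
      rw [eq_div_iff (by simp [hk] : (2*k) ≠ 0)]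
      rw [hftc] at hWint
      linear_combination hWint
    have hb1 : ‖∫ t in (0:ℝ)..1, (q' t : ℂ) * Complex.sin (k * ((1:ℂ) - 2*(t:ℂ)))‖
        ≤ B * Real.exp τ := by
      apply norm_int_le (by norm_num) (by positivity)
      intro t ht
      have ht01 : t ∈ Icc (0:ℝ) 1 := hsub01 (Ioc_subset_Icc_self ht)
      have e1 : ‖Complex.sin (k * ((1:ℂ) - 2*(t:ℂ)))‖ ≤ Real.exp τ := by
        have hcast : ((1:ℂ) - 2*(t:ℂ)) = ((1 - 2*t : ℝ) : ℂ) := by push_cast; ring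
        rw [hcast]
        apply norm_sin_le_exp
        rw [abs_le]
        constructor <;> [linarith [ht01.2]; linarith [ht01.1]]
      calc ‖(q' t : ℂ) * Complex.sin (k * ((1:ℂ) - 2*(t:ℂ)))‖
          = |q' t| * ‖Complex.sin (k * ((1:ℂ) - 2*(t:ℂ)))‖ := by
            rw [norm_mul, Complex.norm_real, Real.norm_eq_abs]
        _ ≤ B * Real.exp τ := mul_le_mul (hB t ht01) e1 (norm_nonneg _) hB0
    have hb2 : ‖W 1 - W 0‖ ≤ 2 * (A * Real.exp τ) := by
      have hWb : ∀ t, t ∈ Icc (0:ℝ) 1 → ‖W t‖ ≤ A * Real.exp τ := by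
        intro t ht01
        have e1 : ‖Complex.sin (k * ((1:ℂ) - 2*(t:ℂ)))‖ ≤ Real.exp τ := by
          have hcast : ((1:ℂ) - 2*(t:ℂ)) = ((1 - 2*t : ℝ) : ℂ) := by push_cast; ring
          rw [hcast]
          apply norm_sin_le_exp
          rw [abs_le]
          constructor <;> [linarith [ht01.2]; linarith [ht01.1]]
        calc ‖W t‖ = |q t| * ‖Complex.sin (k * ((1:ℂ) - 2*(t:ℂ)))‖ := by
              rw [hW]; simp only
              rw [norm_mul, Complex.norm_real, Real.norm_eq_abs]
          _ ≤ A * Real.exp τ := mul_le_mul (hA t ht01) e1 (norm_nonneg _) hA0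
      calc ‖W 1 - W 0‖ ≤ ‖W 1‖ + ‖W 0‖ := norm_sub_le _ _
        _ ≤ A * Real.exp τ + A * Real.exp τ := add_le_add (hWb 1 h1m) (hWb 0 h0m)
        _ = 2 * (A * Real.exp τ) := by ring
    rw [hJformula, norm_div]
    have hn2k : ‖(2*k)‖ = 2*‖k‖ := by rw [norm_mul]; norm_num
    rw [hn2k, div_mul_eq_mul_div]
    gcongr
    calc ‖(∫ t in (0:ℝ)..1, (q' t : ℂ) * Complex.sin (k * ((1:ℂ) - 2*(t:ℂ)))) - (W 1 - W 0)‖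
        ≤ ‖∫ t in (0:ℝ)..1, (q' t : ℂ) * Complex.sin (k * ((1:ℂ) - 2*(t:ℂ)))‖ + ‖W 1 - W 0‖ :=
          norm_sub_le _ _
      _ ≤ B * Real.exp τ + 2 * (A * Real.exp τ) := add_le_add hb1 hb2
      _ = (2*A + B) * Real.exp τ := by ring
  -- final assembly
  have hfinal : y' 1 - (-(k * Complex.sin k)
      + (((1/2) * ∫ t in (0:ℝ)..1, q t : ℝ) : ℂ) * Complex.cos k)
      = (∫ t in (0:ℝ)..1, f2 t) + J/2 := by
    rw [hrep, hsplit, hf1eq]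
    ring
  rw [hfinal]
  calc ‖(∫ t in (0:ℝ)..1, f2 t) + J/2‖ ≤ ‖∫ t in (0:ℝ)..1, f2 t‖ + ‖J‖/2 := by
        refine le_trans (norm_add_le _ _) ?_
        rw [norm_div]
        norm_num
    _ ≤ 2*A^2/‖k‖ * Real.exp τ + ((2*A + B)/(2*‖k‖) * Real.exp τ)/2 := by gcongr
    _ = (2*A^2 + (2*A+B)/4)/‖k‖ * Real.exp τ := by
        field_simp
        ring
    _ ≤ (2*A^2 + A + B) / ‖k‖ * Real.exp τ := by
        gcongr ?_ / _ * _
        linarith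

lemma norm_add_sub_le (a b c : ℂ) : ‖a + b - c‖ ≤ ‖a‖ + ‖b‖ + ‖c‖ :=
  le_trans (norm_sub_le _ _) (add_le_add_left (norm_add_le _ _) _)

/-- Asymptotics of the characteristic function `Δ(λ) = U(C)V(S) - U(S)V(C)` of the problem
`L(q,h,H,γ₀,γ₁,ξ₀,ξ₁)` with `h, H ∈ ℝ`:
`Δ(λ) = k sin k + w cos k + γ₁ cos(kξ₁) - γ₀ cos(k(1-ξ₀)) + O(e^{|Im k|})` as `|k| → ∞`,
where `λ = k²` and `w = h - H - Q(1)`. -/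
theorem stmt_2
    (q : ℝ → ℝ) (hq : ContDiffOn ℝ 1 q (Set.Icc 0 1))
    (h H γ0 γ1 : ℝ) (hγ0 : γ0 ≠ 0) (hγ1 : γ1 ≠ 0)
    (ξ0 ξ1 : ℚ) (hξ0 : (ξ0:ℝ) ∈ Set.Ioo 0 1) (hξ1 : (ξ1:ℝ) ∈ Set.Ioo 0 1)
    (C C' S S' : ℂ → ℝ → ℂ)
    (hsolC : ∀ k : ℂ, IsSLSolution q (k ^ 2) (C k) (C' k))
    (hC0 : ∀ k : ℂ, C k 0 = 1) (hC'0 : ∀ k : ℂ, C' k 0 = 0)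
    (hsolS : ∀ k : ℂ, IsSLSolution q (k ^ 2) (S k) (S' k))
    (hS0 : ∀ k : ℂ, S k 0 = 0) (hS'0 : ∀ k : ℂ, S' k 0 = 1)
    (Δ : ℂ → ℂ)
    (hΔ : ∀ k : ℂ, Δ k =
      Uform h γ0 ξ0 (C k) (C' k) * Vform H γ1 ξ1 (S k) (S' k) -
      Uform h γ0 ξ0 (S k) (S' k) * Vform H γ1 ξ1 (C k) (C' k)) :
    ∃ M R : ℝ, 0 < M ∧ 0 < R ∧ ∀ k : ℂ, R ≤ ‖k‖ →
      ‖Δ k - (k * Complex.sin k +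
          ((h - H - (1/2) * ∫ t in (0:ℝ)..1, q t : ℝ) : ℂ) * Complex.cos k +
          (γ1:ℂ) * Complex.cos (k * (ξ1:ℝ)) -
          (γ0:ℂ) * Complex.cos (k * ((1 - ξ0 : ℝ):ℂ)))‖ ≤
        M * Real.exp |k.im| := by
  have hqc : ContinuousOn q (Icc 0 1) := hq.continuousOn
  have hq'c : ContinuousOn (derivWithin q (Icc 0 1)) (Icc 0 1) :=
    hq.continuousOn_derivWithin (uniqueDiffOn_Icc one_pos) le_rfl
  obtain ⟨A0, hA0⟩ := isCompact_Icc.exists_bound_of_continuousOn hqc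
  obtain ⟨B0, hB0⟩ := isCompact_Icc.exists_bound_of_continuousOn hq'c
  set A := max A0 0 with hAdef
  set B := max B0 0 with hBdef
  have hA : ∀ t ∈ Icc (0:ℝ) 1, |q t| ≤ A := fun t ht =>
    le_trans (by rw [← Real.norm_eq_abs]; exact hA0 t ht) (le_max_left _ _)
  have hB : ∀ t ∈ Icc (0:ℝ) 1, |derivWithin q (Icc 0 1) t| ≤ B := fun t ht =>
    le_trans (by rw [← Real.norm_eq_abs]; exact hB0 t ht) (le_max_left _ _)
  have hA0' : 0 ≤ A := le_max_right _ _
  have hB0' : 0 ≤ B := le_max_right _ _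
  set M0 : ℝ := |h| *(2*A + |H| *2 + |γ1| *2) + ((2*A^2+A+B) + |H| *(2*A) + |γ1| *(2*A))
      + |γ0| *(2*A + |H| *2 + |γ1| *2) with hM0def
  have hM00 : 0 ≤ M0 := by positivity
  refine ⟨M0 + 1, max 1 (2*A), by positivity, lt_of_lt_of_le one_pos (le_max_left _ _), ?_⟩
  intro k hkR
  have hk1 : 1 ≤ ‖k‖ := le_trans (le_max_left _ _) hkR
  have hk2 : 2*A ≤ ‖k‖ := le_trans (le_max_right _ _) hkR
  have hkpos : (0:ℝ) < ‖k‖ := lt_of_lt_of_le one_pos hk1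
  have hk : k ≠ 0 := by simpa using (norm_pos_iff.mp hkpos)
  set τ := |k.im| with hτdef
  have hτ0 : 0 ≤ τ := abs_nonneg _
  have h0m : (0:ℝ) ∈ Icc (0:ℝ) 1 := ⟨le_refl _, zero_le_one⟩
  have h1m : (1:ℝ) ∈ Icc (0:ℝ) 1 := ⟨zero_le_one, le_refl _⟩
  have hξ0m : (ξ0:ℝ) ∈ Icc (0:ℝ) 1 := Ioo_subset_Icc_self hξ0
  have hξ1m : (ξ1:ℝ) ∈ Icc (0:ℝ) 1 := Ioo_subset_Icc_self hξ1
  have hexpb : ∀ {x0 w : ℝ}, x0 ∈ Icc (0:ℝ) 1 → w ∈ Icc (0:ℝ) 1 →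
      τ * |w - x0| ≤ τ := by
    intro x0 w hx0 hw
    calc τ * |w - x0| ≤ τ * 1 := by gcongr; exact habs1' hx0 w hw
      _ = τ := mul_one _
  -- bounds for S
  have bScrude := crude hqc hA hk1 hk2 h0m (hsolS k)
  have bS : ∀ x ∈ Icc (0:ℝ) 1, ‖S k x‖ ≤ 2/‖k‖ * Real.exp τ := by
    intro x hx
    have h2 := bScrude x hx
    rw [hS0 k, hS'0 k] at h2
    simp only [norm_zero, norm_one, zero_add] at h2
    calc ‖S k x‖ ≤ 2*(1/‖k‖) * Real.exp (τ * |x - 0|) := h2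
      _ ≤ 2*(1/‖k‖) * Real.exp τ := by gcongr; exact hexpb h0m hx
      _ = 2/‖k‖ * Real.exp τ := by ring
  have bS'1 : ‖S' k 1 - Complex.cos k‖ ≤ 2*A/‖k‖ * Real.exp τ := by
    have h2 := deriv_first_order hqc hA hk1 hk2 h0m (hsolS k) 1 h1m
    rw [hS0 k, hS'0 k] at h2
    have e1 : -(0 * k * Complex.sin (k * (((1:ℝ):ℂ) - ((0:ℝ):ℂ))))
        + 1 * Complex.cos (k * (((1:ℝ):ℂ) - ((0:ℝ):ℂ))) = Complex.cos k := by
      norm_num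
    rw [e1] at h2
    simp only [norm_zero, norm_one, zero_add] at h2
    calc ‖S' k 1 - Complex.cos k‖ ≤ 2*A*(1/‖k‖) * Real.exp (τ * |1 - (0:ℝ)|) := h2
      _ ≤ 2*A*(1/‖k‖) * Real.exp τ := by gcongr; exact hexpb h0m h1m
      _ = 2*A/‖k‖ * Real.exp τ := by ring
  -- bounds for C
  have bC : ∀ x ∈ Icc (0:ℝ) 1, ‖C k x - Complex.cos (k * ((x:ℂ) - ((0:ℝ):ℂ)))‖
      ≤ 2*A/‖k‖ * Real.exp τ := by
    intro x hx
    have h2 := first_order hqc hA hk1 hk2 h0m (hsolC k) x hx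
    rw [hC0 k, hC'0 k] at h2
    have e1 : C k x - 1 * Complex.cos (k * ((x:ℂ) - ((0:ℝ):ℂ)))
        - 0 * Complex.sin (k * ((x:ℂ) - ((0:ℝ):ℂ)))/k
        = C k x - Complex.cos (k * ((x:ℂ) - ((0:ℝ):ℂ))) := by ring
    rw [e1] at h2
    simp only [norm_one, norm_zero, zero_div, add_zero] at h2
    calc ‖C k x - Complex.cos (k * ((x:ℂ) - ((0:ℝ):ℂ)))‖
        ≤ 2*A*1/‖k‖ * Real.exp (τ * |x - 0|) := h2
      _ ≤ 2*A*1/‖k‖ * Real.exp τ := by gcongr; exact hexpb h0m hx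
      _ = 2*A/‖k‖ * Real.exp τ := by ring
  have bC1 : ‖C k 1 - Complex.cos k‖ ≤ 2*A/‖k‖ * Real.exp τ := by
    have h2 := bC 1 h1m
    have e1 : k * ((((1:ℝ)):ℂ) - ((0:ℝ):ℂ)) = k := by norm_num
    rw [e1] at h2
    exact h2
  have bCξ1 : ‖C k ξ1 - Complex.cos (k * ((ξ1:ℝ):ℂ))‖ ≤ 2*A/‖k‖ * Real.exp τ := by
    have h2 := bC ξ1 hξ1m
    have e1 : k * ((((ξ1:ℝ)):ℂ) - ((0:ℝ):ℂ)) = k * ((ξ1:ℝ):ℂ) := by norm_num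
    rw [e1] at h2
    exact h2
  have bC'1 : ‖C' k 1 - (-(k * Complex.sin k)
      + (((1/2) * ∫ t in (0:ℝ)..1, q t : ℝ) : ℂ) * Complex.cos k)‖
      ≤ (2*A^2+A+B)/‖k‖ * Real.exp τ :=
    second_order hq hA hB hk1 hk2 (hsolC k) (hC0 k) (hC'0 k)
  -- theta
  set θ : ℝ → ℂ := fun x => C k ξ0 * S k x - S k ξ0 * C k x with hθdef
  set θd : ℝ → ℂ := fun x => C k ξ0 * S' k x - S k ξ0 * C' k x with hθddef
  have solθ : IsSLSolution q (k^2) θ θd := by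
    constructor
    · intro x hx
      exact (((hsolS k).1 x hx).const_mul (C k ξ0)).sub (((hsolC k).1 x hx).const_mul (S k ξ0))
    · intro x hx
      have hD := (((hsolS k).2 x hx).const_mul (C k ξ0)).sub
        (((hsolC k).2 x hx).const_mul (S k ξ0))
      have hval : C k ξ0 * (((q x : ℂ) - k^2) * S k x) - S k ξ0 * (((q x : ℂ) - k^2) * C k x)
          = ((q x : ℂ) - k^2) * θ x := by rw [hθdef]; ring
      exact hval ▸ hD
  have hθξ0 : θ (ξ0:ℝ) = 0 := by rw [hθdef]; ring
  have hθdξ0 : θd (ξ0:ℝ) = 1 := by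
    rw [hθddef]
    have hw := wronskian (hsolC k) (hsolS k) (hC0 k) (hC'0 k) (hS0 k) (hS'0 k) ξ0 hξ0m
    simp only
    linear_combination hw
  have bθcrude := crude hqc hA hk1 hk2 hξ0m solθ
  have bθ : ∀ x ∈ Icc (0:ℝ) 1, ‖θ x‖ ≤ 2/‖k‖ * Real.exp τ := by
    intro x hx
    have h2 := bθcrude x hx
    rw [hθξ0, hθdξ0] at h2
    simp only [norm_zero, norm_one, zero_add] at h2
    calc ‖θ x‖ ≤ 2*(1/‖k‖) * Real.exp (τ * |x - (ξ0:ℝ)|) := h2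
      _ ≤ 2*(1/‖k‖) * Real.exp τ := by gcongr; exact hexpb hξ0m hx
      _ = 2/‖k‖ * Real.exp τ := by ring
  have bθ'1 : ‖θd 1 - Complex.cos (k * ((1 - ξ0 : ℝ):ℂ))‖ ≤ 2*A/‖k‖ * Real.exp τ := by
    have h2 := deriv_first_order hqc hA hk1 hk2 hξ0m solθ 1 h1m
    rw [hθξ0, hθdξ0] at h2
    have e1 : -(0 * k * Complex.sin (k * (((1:ℝ):ℂ) - ((ξ0:ℝ):ℂ))))
        + 1 * Complex.cos (k * (((1:ℝ):ℂ) - ((ξ0:ℝ):ℂ)))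
        = Complex.cos (k * ((1 - ξ0 : ℝ):ℂ)) := by
      push_cast
      ring_nf
    rw [e1] at h2
    simp only [norm_zero, norm_one, zero_add] at h2
    calc ‖θd 1 - Complex.cos (k * ((1 - ξ0 : ℝ):ℂ))‖
        ≤ 2*A*(1/‖k‖) * Real.exp (τ * |1 - (ξ0:ℝ)|) := h2
      _ ≤ 2*A*(1/‖k‖) * Real.exp τ := by gcongr; exact hexpb hξ0m h1m
      _ = 2*A/‖k‖ * Real.exp τ := by ring
  -- algebraic decomposition
  set Q1 : ℝ := (1/2) * ∫ t in (0:ℝ)..1, q t with hQ1def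
  set VS : ℂ := S' k 1 + (H:ℂ) * S k 1 - (γ1:ℂ) * S k ξ1 with hVSdef
  set VC : ℂ := C' k 1 + (H:ℂ) * C k 1 - (γ1:ℂ) * C k ξ1 with hVCdef
  set Vθ : ℂ := θd 1 + (H:ℂ) * θ 1 - (γ1:ℂ) * θ ξ1 with hVθdef
  have key : Δ k = (h:ℂ) * VS - VC - (γ0:ℂ) * Vθ := by
    rw [hΔ k]
    simp only [Uform, Vform, hVSdef, hVCdef, hVθdef, hθdef, hθddef, hC0 k, hC'0 k, hS0 k, hS'0 k]
    ring
  have decomp : Δ k - (k * Complex.sin k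
        + ((h - H - (1/2) * ∫ t in (0:ℝ)..1, q t : ℝ) : ℂ) * Complex.cos k
        + (γ1:ℂ) * Complex.cos (k * ((ξ1:ℝ):ℂ))
        - (γ0:ℂ) * Complex.cos (k * ((1 - ξ0 : ℝ):ℂ)))
      = (h:ℂ) * (VS - Complex.cos k)
        - (VC - (-(k * Complex.sin k) + ((Q1 : ℝ):ℂ) * Complex.cos k + (H:ℂ) * Complex.cos k
            - (γ1:ℂ) * Complex.cos (k * ((ξ1:ℝ):ℂ))))
        - (γ0:ℂ) * (Vθ - Complex.cos (k * ((1 - ξ0 : ℝ):ℂ))) := by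
    rw [key, hQ1def]
    push_cast
    ring
  -- norm bounds for the three blocks
  have e1 : ‖VS - Complex.cos k‖ ≤ (2*A + |H| *2 + |γ1| *2)/‖k‖ * Real.exp τ := by
    have : VS - Complex.cos k
        = (S' k 1 - Complex.cos k) + (H:ℂ) * S k 1 - (γ1:ℂ) * S k ξ1 := by
      rw [hVSdef]; ring
    rw [this]
    calc ‖(S' k 1 - Complex.cos k) + (H:ℂ) * S k 1 - (γ1:ℂ) * S k ξ1‖
        ≤ ‖S' k 1 - Complex.cos k‖ + ‖(H:ℂ) * S k 1‖ + ‖(γ1:ℂ) * S k ξ1‖ :=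
          norm_add_sub_le _ _ _
      _ ≤ 2*A/‖k‖ * Real.exp τ + |H| * (2/‖k‖ * Real.exp τ) + |γ1| * (2/‖k‖ * Real.exp τ) := by
          refine add_le_add (add_le_add bS'1 ?_) ?_
          · rw [norm_mul, Complex.norm_real, Real.norm_eq_abs]
            exact mul_le_mul_of_nonneg_left (bS 1 h1m) (abs_nonneg _)
          · rw [norm_mul, Complex.norm_real, Real.norm_eq_abs]
            exact mul_le_mul_of_nonneg_left (bS ξ1 hξ1m) (abs_nonneg _)
      _ = (2*A + |H| *2 + |γ1| *2)/‖k‖ * Real.exp τ := by ring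
  have e2 : ‖VC - (-(k * Complex.sin k) + ((Q1 : ℝ):ℂ) * Complex.cos k + (H:ℂ) * Complex.cos k
      - (γ1:ℂ) * Complex.cos (k * ((ξ1:ℝ):ℂ)))‖
      ≤ ((2*A^2+A+B) + |H| *(2*A) + |γ1| *(2*A))/‖k‖ * Real.exp τ := by
    have : VC - (-(k * Complex.sin k) + ((Q1 : ℝ):ℂ) * Complex.cos k + (H:ℂ) * Complex.cos k
        - (γ1:ℂ) * Complex.cos (k * ((ξ1:ℝ):ℂ)))
        = (C' k 1 - (-(k * Complex.sin k) + ((Q1 : ℝ):ℂ) * Complex.cos k))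
          + (H:ℂ) * (C k 1 - Complex.cos k)
          - (γ1:ℂ) * (C k ξ1 - Complex.cos (k * ((ξ1:ℝ):ℂ))) := by
      rw [hVCdef]; ring
    rw [this]
    calc ‖(C' k 1 - (-(k * Complex.sin k) + ((Q1 : ℝ):ℂ) * Complex.cos k))
          + (H:ℂ) * (C k 1 - Complex.cos k)
          - (γ1:ℂ) * (C k ξ1 - Complex.cos (k * ((ξ1:ℝ):ℂ)))‖
        ≤ ‖C' k 1 - (-(k * Complex.sin k) + ((Q1 : ℝ):ℂ) * Complex.cos k)‖
          + ‖(H:ℂ) * (C k 1 - Complex.cos k)‖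
          + ‖(γ1:ℂ) * (C k ξ1 - Complex.cos (k * ((ξ1:ℝ):ℂ)))‖ := norm_add_sub_le _ _ _
      _ ≤ (2*A^2+A+B)/‖k‖ * Real.exp τ + |H| * (2*A/‖k‖ * Real.exp τ)
          + |γ1| * (2*A/‖k‖ * Real.exp τ) := by
          refine add_le_add (add_le_add bC'1 ?_) ?_
          · rw [norm_mul, Complex.norm_real, Real.norm_eq_abs]
            exact mul_le_mul_of_nonneg_left bC1 (abs_nonneg _)
          · rw [norm_mul, Complex.norm_real, Real.norm_eq_abs]
            exact mul_le_mul_of_nonneg_left bCξ1 (abs_nonneg _)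
      _ = ((2*A^2+A+B) + |H| *(2*A) + |γ1| *(2*A))/‖k‖ * Real.exp τ := by ring
  have e3 : ‖Vθ - Complex.cos (k * ((1 - ξ0 : ℝ):ℂ))‖
      ≤ (2*A + |H| *2 + |γ1| *2)/‖k‖ * Real.exp τ := by
    have : Vθ - Complex.cos (k * ((1 - ξ0 : ℝ):ℂ))
        = (θd 1 - Complex.cos (k * ((1 - ξ0 : ℝ):ℂ))) + (H:ℂ) * θ 1 - (γ1:ℂ) * θ ξ1 := by
      rw [hVθdef]; ring
    rw [this]
    calc ‖(θd 1 - Complex.cos (k * ((1 - ξ0 : ℝ):ℂ))) + (H:ℂ) * θ 1 - (γ1:ℂ) * θ ξ1‖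
        ≤ ‖θd 1 - Complex.cos (k * ((1 - ξ0 : ℝ):ℂ))‖ + ‖(H:ℂ) * θ 1‖ + ‖(γ1:ℂ) * θ ξ1‖ :=
          norm_add_sub_le _ _ _
      _ ≤ 2*A/‖k‖ * Real.exp τ + |H| * (2/‖k‖ * Real.exp τ) + |γ1| * (2/‖k‖ * Real.exp τ) := by
          refine add_le_add (add_le_add bθ'1 ?_) ?_
          · rw [norm_mul, Complex.norm_real, Real.norm_eq_abs]
            exact mul_le_mul_of_nonneg_left (bθ 1 h1m) (abs_nonneg _)
          · rw [norm_mul, Complex.norm_real, Real.norm_eq_abs]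
            exact mul_le_mul_of_nonneg_left (bθ ξ1 hξ1m) (abs_nonneg _)
      _ = (2*A + |H| *2 + |γ1| *2)/‖k‖ * Real.exp τ := by ring
  -- final assembly
  calc ‖Δ k - (k * Complex.sin k
        + ((h - H - (1/2) * ∫ t in (0:ℝ)..1, q t : ℝ) : ℂ) * Complex.cos k
        + (γ1:ℂ) * Complex.cos (k * ((ξ1:ℝ):ℂ))
        - (γ0:ℂ) * Complex.cos (k * ((1 - ξ0 : ℝ):ℂ)))‖
      = ‖(h:ℂ) * (VS - Complex.cos k)
        - (VC - (-(k * Complex.sin k) + ((Q1 : ℝ):ℂ) * Complex.cos k + (H:ℂ) * Complex.cos k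
            - (γ1:ℂ) * Complex.cos (k * ((ξ1:ℝ):ℂ))))
        - (γ0:ℂ) * (Vθ - Complex.cos (k * ((1 - ξ0 : ℝ):ℂ)))‖ := by rw [decomp]
    _ ≤ ‖(h:ℂ) * (VS - Complex.cos k)‖
        + ‖VC - (-(k * Complex.sin k) + ((Q1 : ℝ):ℂ) * Complex.cos k + (H:ℂ) * Complex.cos k
            - (γ1:ℂ) * Complex.cos (k * ((ξ1:ℝ):ℂ)))‖
        + ‖(γ0:ℂ) * (Vθ - Complex.cos (k * ((1 - ξ0 : ℝ):ℂ)))‖ := by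
        refine le_trans (norm_sub_le _ _) ?_
        gcongr
        exact norm_sub_le _ _
    _ ≤ |h| * ((2*A + |H| *2 + |γ1| *2)/‖k‖ * Real.exp τ)
        + ((2*A^2+A+B) + |H| *(2*A) + |γ1| *(2*A))/‖k‖ * Real.exp τ
        + |γ0| * ((2*A + |H| *2 + |γ1| *2)/‖k‖ * Real.exp τ) := by
        refine add_le_add (add_le_add ?_ e2) ?_
        · rw [norm_mul, Complex.norm_real, Real.norm_eq_abs]
          exact mul_le_mul_of_nonneg_left e1 (abs_nonneg _)
        · rw [norm_mul, Complex.norm_real, Real.norm_eq_abs]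
          exact mul_le_mul_of_nonneg_left e3 (abs_nonneg _)
    _ = M0/‖k‖ * Real.exp τ := by rw [hM0def]; ring
    _ ≤ (M0 + 1) * Real.exp τ := by
        have : M0/‖k‖ ≤ M0 + 1 := by
          calc M0/‖k‖ ≤ M0/1 := by gcongr
            _ = M0 := div_one _
            _ ≤ M0 + 1 := by linarith
        gcongr
end SLall
end

section
/- (Lemma 2, case h, H ∈ ℝ.) For the problem L with h, H ∈ ℝ, the eigenfunction φ(·,λₙ) := U(S(·,λₙ))·C(·,λₙ) − U(C(·,λₙ))·S(·,λₙ) corresponding to the eigenvalue λₙ satisfies, for sufficiently large n and uniformly for x ∈ [0,1], φ(x,λₙ) = cos(kₙx) + ((Q(x) − h)/kₙ)·sin(kₙx) + (γ₀/kₙ)·sin(kₙ(x − ξ₀)) + O(1/kₙ²), where kₙ = √λₙ. -/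
open Set Filter Asymptotics

/-- `lam` enumerates the zeros of `Δ` (the eigenvalues), ordered by modulus. -/
def EnumeratesZeros (Δ : ℂ → ℂ) (lam : ℕ → ℂ) : Prop :=
  Function.Injective lam ∧ (∀ n, Δ (lam n) = 0) ∧ (∀ μ : ℂ, Δ μ = 0 → ∃ n, lam n = μ) ∧
    Monotone fun n => ‖lam n‖

private lemma hasDerivAt_ccos (r x : ℝ) :
    HasDerivAt (fun t : ℝ => Complex.cos ((r:ℂ) * t)) (-(r:ℂ) * Complex.sin ((r:ℂ)*x)) x := by
  have h1 : HasDerivAt (fun z : ℂ => Complex.cos ((r:ℂ) * z))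
      (-(r:ℂ) * Complex.sin ((r:ℂ)*(x:ℂ))) (x:ℂ) := by
    have h := (Complex.hasDerivAt_cos ((r:ℂ)*(x:ℂ))).comp (x:ℂ)
      ((hasDerivAt_id (x:ℂ)).const_mul (r:ℂ))
    simp only [mul_one, Function.comp_def] at h
    exact h.congr_deriv (by ring)
  exact h1.comp_ofReal

private lemma hasDerivAt_csin (r x : ℝ) :
    HasDerivAt (fun t : ℝ => Complex.sin ((r:ℂ) * t)) ((r:ℂ) * Complex.cos ((r:ℂ)*x)) x := by
  have h1 : HasDerivAt (fun z : ℂ => Complex.sin ((r:ℂ) * z))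
      ((r:ℂ) * Complex.cos ((r:ℂ)*(x:ℂ))) (x:ℂ) := by
    have h := (Complex.hasDerivAt_sin ((r:ℂ)*(x:ℂ))).comp (x:ℂ)
      ((hasDerivAt_id (x:ℂ)).const_mul (r:ℂ))
    simp only [mul_one, Function.comp_def] at h
    exact h.congr_deriv (by ring)
  exact h1.comp_ofReal

private lemma norm_ccos_le (r x : ℝ) : ‖Complex.cos ((r:ℂ)*x)‖ ≤ 1 := by
  rw [show (r:ℂ)*(x:ℂ) = ((r*x : ℝ) : ℂ) by push_cast; ring, ← Complex.ofReal_cos,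
    Complex.norm_real, Real.norm_eq_abs]
  exact Real.abs_cos_le_one _

private lemma norm_csin_le (r x : ℝ) : ‖Complex.sin ((r:ℂ)*x)‖ ≤ 1 := by
  rw [show (r:ℂ)*(x:ℂ) = ((r*x : ℝ) : ℂ) by push_cast; ring, ← Complex.ofReal_sin,
    Complex.norm_real, Real.norm_eq_abs]
  exact Real.abs_sin_le_one _

private lemma cont_ccos (r : ℝ) : Continuous (fun t : ℝ => Complex.cos ((r:ℂ) * t)) :=
  Complex.continuous_cos.comp (continuous_const.mul Complex.continuous_ofReal)

private lemma cont_csin (r : ℝ) : Continuous (fun t : ℝ => Complex.sin ((r:ℂ) * t)) :=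
  Complex.continuous_sin.comp (continuous_const.mul Complex.continuous_ofReal)

private lemma slsol_cont {q : ℝ → ℝ} {lam : ℂ} {y y' : ℝ → ℂ}
    (hy : IsSLSolution q lam y y') : ContinuousOn y (Set.Icc 0 1) :=
  fun t ht => (hy.1 t ht).continuousWithinAt

private lemma sl_rep {q : ℝ → ℝ} (hq : ContinuousOn q (Set.Icc 0 1))
    {r : ℝ} (hr : r ≠ 0) {y y' : ℝ → ℂ}
    (hy : IsSLSolution q (((r:ℂ))^2) y y') :
    ∀ x ∈ Set.Icc (0:ℝ) 1,
      y x = y 0 * Complex.cos ((r:ℂ)*x) + (y' 0 / r) * Complex.sin ((r:ℂ)*x)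
        + (1/(r:ℂ)) * (Complex.sin ((r:ℂ)*x) *
              (∫ t in (0:ℝ)..x, (q t : ℂ) * y t * Complex.cos ((r:ℂ)*t))
            - Complex.cos ((r:ℂ)*x) *
              (∫ t in (0:ℝ)..x, (q t : ℂ) * y t * Complex.sin ((r:ℂ)*t))) := by
  have hrC : (r:ℂ) ≠ 0 := by exact_mod_cast hr
  have hycont : ContinuousOn y (Set.Icc 0 1) := fun t ht => (hy.1 t ht).continuousWithinAt
  have hy'cont : ContinuousOn y' (Set.Icc 0 1) := fun t ht => (hy.2 t ht).continuousWithinAt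
  set c1 : ℝ → ℂ := fun t => y t * Complex.cos ((r:ℂ)*t) - y' t * Complex.sin ((r:ℂ)*t) / r
    with hc1def
  set c2 : ℝ → ℂ := fun t => y t * Complex.sin ((r:ℂ)*t) + y' t * Complex.cos ((r:ℂ)*t) / r
    with hc2def
  have hd1 : ∀ t ∈ Set.Icc (0:ℝ) 1, HasDerivWithinAt c1
      ((-(1:ℂ)/r) * ((q t : ℂ) * y t * Complex.sin ((r:ℂ)*t))) (Set.Icc 0 1) t := by
    intro t ht
    have := ((hy.1 t ht).mul (hasDerivAt_ccos r t).hasDerivWithinAt).sub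
      (((hy.2 t ht).mul (hasDerivAt_csin r t).hasDerivWithinAt).div_const (r:ℂ))
    refine this.congr_deriv ?_
    field_simp
    ring
  have hd2 : ∀ t ∈ Set.Icc (0:ℝ) 1, HasDerivWithinAt c2
      (((1:ℂ)/r) * ((q t : ℂ) * y t * Complex.cos ((r:ℂ)*t))) (Set.Icc 0 1) t := by
    intro t ht
    have := ((hy.1 t ht).mul (hasDerivAt_csin r t).hasDerivWithinAt).add
      (((hy.2 t ht).mul (hasDerivAt_ccos r t).hasDerivWithinAt).div_const (r:ℂ))
    refine this.congr_deriv ?_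
    field_simp
    ring
  have hc1cont : ContinuousOn c1 (Set.Icc 0 1) :=
    (hycont.mul (cont_ccos r).continuousOn).sub
      ((hy'cont.mul (cont_csin r).continuousOn).div_const _)
  have hc2cont : ContinuousOn c2 (Set.Icc 0 1) :=
    (hycont.mul (cont_csin r).continuousOn).add
      ((hy'cont.mul (cont_ccos r).continuousOn).div_const _)
  intro x hx
  have hsub : Set.Icc (0:ℝ) x ⊆ Set.Icc 0 1 := Set.Icc_subset_Icc le_rfl hx.2
  have hqx : ContinuousOn (fun t => (q t : ℂ) * y t) (Set.Icc 0 x) :=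
    ((Complex.continuous_ofReal.comp_continuousOn hq).mul hycont).mono hsub
  have hint1 : IntervalIntegrable (fun t => (q t : ℂ) * y t * Complex.cos ((r:ℂ)*t))
      MeasureTheory.volume 0 x := by
    apply ContinuousOn.intervalIntegrable
    rw [Set.uIcc_of_le hx.1]
    exact hqx.mul (cont_ccos r).continuousOn
  have hint2 : IntervalIntegrable (fun t => (q t : ℂ) * y t * Complex.sin ((r:ℂ)*t))
      MeasureTheory.volume 0 x := by
    apply ContinuousOn.intervalIntegrable
    rw [Set.uIcc_of_le hx.1]
    exact hqx.mul ((cont_csin r).continuousOn)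
  have hmemI : ∀ t ∈ Set.Ioo (0:ℝ) x, Set.Icc (0:ℝ) 1 ∈ nhds t := by
    intro t ht
    exact Icc_mem_nhds ht.1 (lt_of_lt_of_le ht.2 hx.2)
  have key1 : ∫ t in (0:ℝ)..x, (-(1:ℂ)/r) * ((q t : ℂ) * y t * Complex.sin ((r:ℂ)*t))
      = c1 x - c1 0 := by
    apply intervalIntegral.integral_eq_sub_of_hasDeriv_right_of_le hx.1
      (hc1cont.mono hsub)
    · intro t ht
      exact (((hd1 t (hsub ⟨le_of_lt ht.1, le_of_lt ht.2⟩)).hasDerivAt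
        (hmemI t ht))).hasDerivWithinAt
    · exact hint2.const_mul _
  have key2 : ∫ t in (0:ℝ)..x, ((1:ℂ)/r) * ((q t : ℂ) * y t * Complex.cos ((r:ℂ)*t))
      = c2 x - c2 0 := by
    apply intervalIntegral.integral_eq_sub_of_hasDeriv_right_of_le hx.1
      (hc2cont.mono hsub)
    · intro t ht
      exact (((hd2 t (hsub ⟨le_of_lt ht.1, le_of_lt ht.2⟩)).hasDerivAt
        (hmemI t ht))).hasDerivWithinAt
    · exact hint1.const_mul _
  rw [intervalIntegral.integral_const_mul] at key1 key2
  have h10 : c1 0 = y 0 := by simp [hc1def]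
  have h20 : c2 0 = y' 0 / r := by simp [hc2def]
  have hrec : c1 x * Complex.cos ((r:ℂ)*x) + c2 x * Complex.sin ((r:ℂ)*x) = y x := by
    simp only [hc1def, hc2def]
    linear_combination y x * Complex.cos_sq_add_sin_sq ((r:ℂ)*x)
  have e1 : c1 x = y 0 + (-(1:ℂ)/r) *
      ∫ t in (0:ℝ)..x, (q t : ℂ) * y t * Complex.sin ((r:ℂ)*t) := by
    linear_combination -key1 + h10
  have e2 : c2 x = y' 0 / r + ((1:ℂ)/r) *
      ∫ t in (0:ℝ)..x, (q t : ℂ) * y t * Complex.cos ((r:ℂ)*t) := by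
    linear_combination -key2 + h20
  rw [← hrec, e1, e2]
  ring

private lemma sl_Jbound {q : ℝ → ℝ} {Mq m : ℝ}
    (hMq : ∀ t ∈ Set.Icc (0:ℝ) 1, |q t| ≤ Mq) {y : ℝ → ℂ}
    (hm : ∀ t ∈ Set.Icc (0:ℝ) 1, ‖y t‖ ≤ m) (hm0 : 0 ≤ m)
    {x : ℝ} (hx : x ∈ Set.Icc (0:ℝ) 1) (g : ℝ → ℂ) (hg : ∀ t, ‖g t‖ ≤ 1) :
    ‖∫ t in (0:ℝ)..x, (q t : ℂ) * y t * g t‖ ≤ Mq * m := by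
  have hMq0 : 0 ≤ Mq := le_trans (abs_nonneg _) (hMq 0 (by norm_num))
  have := intervalIntegral.norm_integral_le_of_norm_le_const
    (C := Mq * m) (a := (0:ℝ)) (b := x) (f := fun t => (q t : ℂ) * y t * g t) ?_
  · calc ‖∫ t in (0:ℝ)..x, (q t : ℂ) * y t * g t‖ ≤ Mq * m * |x - 0| := this
      _ ≤ Mq * m * 1 := by
        apply mul_le_mul_of_nonneg_left _ (by positivity)
        rw [sub_zero, abs_of_nonneg hx.1]; exact hx.2
      _ = Mq * m := mul_one _
  · intro t ht
    rw [Set.uIoc_of_le hx.1] at ht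
    have ht' : t ∈ Set.Icc (0:ℝ) 1 := ⟨le_of_lt ht.1, le_trans ht.2 hx.2⟩
    rw [norm_mul, norm_mul, Complex.norm_real, Real.norm_eq_abs]
    calc |q t| * ‖y t‖ * ‖g t‖ ≤ Mq * m * 1 := by
          apply mul_le_mul (mul_le_mul (hMq t ht') (hm t ht') (norm_nonneg _) hMq0)
            (hg t) (norm_nonneg _) (by positivity)
      _ = Mq * m := mul_one _

private lemma sl_sup {q : ℝ → ℝ} (hq : ContinuousOn q (Set.Icc 0 1)) {Mq : ℝ}
    (hMq : ∀ t ∈ Set.Icc (0:ℝ) 1, |q t| ≤ Mq) {r : ℝ} (hr : 4*(Mq+1) ≤ |r|)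
    {y y' : ℝ → ℂ} (hy : IsSLSolution q (((r:ℂ))^2) y y') :
    (∀ x ∈ Set.Icc (0:ℝ) 1, ‖y x‖ ≤ 2*(‖y 0‖ + ‖y' 0‖/|r|)) ∧
    (∀ x ∈ Set.Icc (0:ℝ) 1,
      ‖y x - (y 0 * Complex.cos ((r:ℂ)*x) + (y' 0/r) * Complex.sin ((r:ℂ)*x))‖ ≤
        4*Mq*(‖y 0‖ + ‖y' 0‖/|r|)/|r|) := by
  have hMq0 : 0 ≤ Mq := le_trans (abs_nonneg _) (hMq 0 (by norm_num))
  have hr0 : (0:ℝ) < |r| := lt_of_lt_of_le (by positivity) hr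
  have hrne : r ≠ 0 := fun hh => by simp [hh] at hr0
  obtain ⟨x₀, hx₀, hmax⟩ := isCompact_Icc.exists_isMaxOn (s := Set.Icc (0:ℝ) 1)
    (Set.nonempty_Icc.mpr (by norm_num)) ((slsol_cont hy).norm)
  set m := ‖y x₀‖ with hmdef
  have hm : ∀ t ∈ Set.Icc (0:ℝ) 1, ‖y t‖ ≤ m := fun t ht => hmax ht
  have hm0 : 0 ≤ m := norm_nonneg _
  set a := ‖y 0‖ + ‖y' 0‖/|r| with hadef
  have ha0 : 0 ≤ a := by positivity
  have hrem : ∀ x ∈ Set.Icc (0:ℝ) 1,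
      ‖y x - (y 0 * Complex.cos ((r:ℂ)*x) + (y' 0/r) * Complex.sin ((r:ℂ)*x))‖ ≤
        2*Mq*m/|r| := by
    intro x hx
    rw [sl_rep hq hrne hy x hx]
    have h1 := sl_Jbound hMq hm hm0 hx _ (norm_ccos_le r)
    have h2 := sl_Jbound hMq hm hm0 hx _ (norm_csin_le r)
    have hMm : 0 ≤ Mq * m := by positivity
    rw [show ∀ A B C : ℂ, A + B + C - (A + B) = C by intros; ring]
    rw [norm_mul]
    have hn : ‖(1/(r:ℂ))‖ = 1/|r| := by
      rw [norm_div, norm_one, Complex.norm_real, Real.norm_eq_abs]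
    rw [hn]
    calc 1/|r| * ‖_‖ ≤ 1/|r| * (Mq*m + Mq*m) := by
          apply mul_le_mul_of_nonneg_left _ (by positivity)
          refine le_trans (norm_sub_le _ _) (add_le_add ?_ ?_)
          · refine le_trans ?_ (le_of_eq (one_mul (Mq*m)))
            rw [norm_mul]
            exact mul_le_mul (norm_csin_le r x) h1 (norm_nonneg _) zero_le_one
          · refine le_trans ?_ (le_of_eq (one_mul (Mq*m)))
            rw [norm_mul]
            exact mul_le_mul (norm_ccos_le r x) h2 (norm_nonneg _) zero_le_one
      _ = 2*Mq*m/|r| := by ring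
  have hP : ∀ x : ℝ, ‖y 0 * Complex.cos ((r:ℂ)*x) + (y' 0/r) * Complex.sin ((r:ℂ)*x)‖ ≤ a := by
    intro x
    refine le_trans (norm_add_le _ _) ?_
    rw [hadef, norm_mul, norm_mul, norm_div, Complex.norm_real, Real.norm_eq_abs]
    refine add_le_add ?_ ?_
    · refine le_trans (mul_le_mul_of_nonneg_left (norm_ccos_le r x) (norm_nonneg _)) ?_
      rw [mul_one]
    · refine le_trans (mul_le_mul_of_nonneg_left (norm_csin_le r x) (by positivity)) ?_
      rw [mul_one]
  have hyx : ∀ x ∈ Set.Icc (0:ℝ) 1, ‖y x‖ ≤ a + 2*Mq*m/|r| := by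
    intro x hx
    have h3 := hrem x hx
    have h4 := hP x
    have h5 : ‖y x‖ ≤ ‖y x - (y 0 * Complex.cos ((r:ℂ)*x) + (y' 0/r) * Complex.sin ((r:ℂ)*x))‖
        + ‖y 0 * Complex.cos ((r:ℂ)*x) + (y' 0/r) * Complex.sin ((r:ℂ)*x)‖ := by
      simpa using norm_add_le
        (y x - (y 0 * Complex.cos ((r:ℂ)*x) + (y' 0/r) * Complex.sin ((r:ℂ)*x)))
        (y 0 * Complex.cos ((r:ℂ)*x) + (y' 0/r) * Complex.sin ((r:ℂ)*x))
    linarith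
  have hhalf : 2*Mq*m/|r| ≤ m/2 := by
    rw [div_le_div_iff₀ hr0 (by norm_num)]
    nlinarith [mul_le_mul_of_nonneg_left hr hm0]
  have hm2a : m ≤ 2*a := by
    have := hyx x₀ hx₀
    rw [← hmdef] at this
    clear_value a m
    linarith
  constructor
  · intro x hx
    calc ‖y x‖ ≤ m := hm x hx
      _ ≤ 2*a := hm2a
      _ = 2*(‖y 0‖ + ‖y' 0‖/|r|) := by rw [hadef]
  · intro x hx
    refine le_trans (hrem x hx) ?_
    rw [div_le_div_iff₀ hr0 hr0]
    have : 2*Mq*m ≤ 4*Mq*a := by nlinarith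
    nlinarith [hr0]

private lemma osc_cos {q : ℝ → ℝ} (hq : ContDiffOn ℝ 1 q (Set.Icc 0 1)) {Mq Mq' : ℝ}
    (hMq : ∀ t ∈ Set.Icc (0:ℝ) 1, |q t| ≤ Mq)
    (hMq' : ∀ t ∈ Set.Icc (0:ℝ) 1, |derivWithin q (Set.Icc 0 1) t| ≤ Mq')
    {r : ℝ} (hr0 : 0 < |r|) {x : ℝ} (hx : x ∈ Set.Icc (0:ℝ) 1) :
    |∫ t in (0:ℝ)..x, q t * Real.cos (2*r*t)| ≤ (Mq + Mq')/(2*|r|) := by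
  have hMq0 : 0 ≤ Mq := le_trans (abs_nonneg _) (hMq 0 (by norm_num))
  have hMq'0 : 0 ≤ Mq' := le_trans (abs_nonneg _) (hMq' 0 (by norm_num))
  have hrne : r ≠ 0 := fun hh => by simp [hh] at hr0
  set q' := derivWithin q (Set.Icc (0:ℝ) 1) with hq'def
  have hq'cont : ContinuousOn q' (Set.Icc 0 1) :=
    hq.continuousOn_derivWithin (uniqueDiffOn_Icc (by norm_num)) le_rfl
  have hqcont : ContinuousOn q (Set.Icc 0 1) := hq.continuousOn
  have hsub : Set.Icc (0:ℝ) x ⊆ Set.Icc 0 1 := Set.Icc_subset_Icc le_rfl hx.2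
  -- primitive
  set Φ : ℝ → ℝ := fun t => q t * Real.sin (2*r*t) / (2*r) with hΦdef
  have hder : ∀ t ∈ Set.Ioo (0:ℝ) x, HasDerivAt Φ
      (q' t * Real.sin (2*r*t) / (2*r) + q t * Real.cos (2*r*t)) t := by
    intro t ht
    have htI : t ∈ Set.Icc (0:ℝ) 1 := hsub ⟨le_of_lt ht.1, le_of_lt ht.2⟩
    have hmem : Set.Icc (0:ℝ) 1 ∈ nhds t := Icc_mem_nhds ht.1 (lt_of_lt_of_le ht.2 hx.2)
    have hqd : HasDerivAt q (q' t) t :=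
      ((hq.differentiableOn one_ne_zero t htI).hasDerivWithinAt).hasDerivAt hmem
    have hs : HasDerivAt (fun t : ℝ => Real.sin (2*r*t)) (2*r*Real.cos (2*r*t)) t := by
      have := (Real.hasDerivAt_sin (2*r*t)).comp t ((hasDerivAt_id t).const_mul (2*r))
      simpa [mul_comm, Function.comp_def] using this
    have := (hqd.mul hs).div_const (2*r)
    refine this.congr_deriv ?_
    field_simp
  have hint' : IntervalIntegrable (fun t => q' t * Real.sin (2*r*t) / (2*r))
      MeasureTheory.volume 0 x := by
    apply ContinuousOn.intervalIntegrable
    rw [Set.uIcc_of_le hx.1]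
    exact (((hq'cont.mono hsub).mul
      (Real.continuous_sin.comp (continuous_const.mul continuous_id)).continuousOn).div_const _)
  have hintc : IntervalIntegrable (fun t => q t * Real.cos (2*r*t))
      MeasureTheory.volume 0 x := by
    apply ContinuousOn.intervalIntegrable
    rw [Set.uIcc_of_le hx.1]
    exact ((hqcont.mono hsub).mul
      (Real.continuous_cos.comp (continuous_const.mul continuous_id)).continuousOn)
  have key : ∫ t in (0:ℝ)..x, (q' t * Real.sin (2*r*t) / (2*r) + q t * Real.cos (2*r*t))
      = Φ x - Φ 0 := by
    apply intervalIntegral.integral_eq_sub_of_hasDeriv_right_of_le hx.1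
    · exact ((hqcont.mono hsub).mul
        (Real.continuous_sin.comp (continuous_const.mul continuous_id)).continuousOn).div_const _
    · exact fun t ht => (hder t ht).hasDerivWithinAt
    · exact hint'.add hintc
  rw [intervalIntegral.integral_add hint' hintc] at key
  have hΦ0 : Φ 0 = 0 := by simp [hΦdef]
  have hΦx : |Φ x| ≤ Mq / (2*|r|) := by
    rw [hΦdef]
    simp only
    rw [abs_div, abs_mul, abs_mul, abs_two]
    gcongr
    calc |q x| * |Real.sin (2*r*x)| ≤ Mq * 1 :=
        mul_le_mul (hMq x hx) (Real.abs_sin_le_one _) (abs_nonneg _) hMq0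
      _ = Mq := mul_one _
  have hq'int : |∫ t in (0:ℝ)..x, q' t * Real.sin (2*r*t) / (2*r)| ≤ Mq' / (2*|r|) := by
    have := intervalIntegral.norm_integral_le_of_norm_le_const
      (C := Mq' / (2*|r|)) (a := (0:ℝ)) (b := x)
      (f := fun t => q' t * Real.sin (2*r*t) / (2*r)) ?_
    · rw [Real.norm_eq_abs] at this
      refine this.trans ?_
      rw [sub_zero, abs_of_nonneg hx.1]
      nlinarith [hx.2, div_nonneg hMq'0 (by positivity : (0:ℝ) ≤ 2*|r|)]
    · intro t ht
      rw [Set.uIoc_of_le hx.1] at ht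
      have ht' : t ∈ Set.Icc (0:ℝ) 1 := ⟨le_of_lt ht.1, le_trans ht.2 hx.2⟩
      rw [Real.norm_eq_abs, abs_div, abs_mul, abs_mul, abs_two]
      gcongr
      calc |q' t| * |Real.sin (2*r*t)| ≤ Mq' * 1 :=
          mul_le_mul (hMq' t ht') (Real.abs_sin_le_one _) (abs_nonneg _) hMq'0
        _ = Mq' := mul_one _
  have hfin : ∫ t in (0:ℝ)..x, q t * Real.cos (2*r*t)
      = Φ x - ∫ t in (0:ℝ)..x, q' t * Real.sin (2*r*t) / (2*r) := by
    rw [hΦ0] at key; linarith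
  rw [hfin]
  calc |Φ x - ∫ t in (0:ℝ)..x, q' t * Real.sin (2*r*t) / (2*r)|
      ≤ |Φ x| + |∫ t in (0:ℝ)..x, q' t * Real.sin (2*r*t) / (2*r)| := abs_sub _ _
    _ ≤ Mq/(2*|r|) + Mq'/(2*|r|) := add_le_add hΦx hq'int
    _ = (Mq + Mq')/(2*|r|) := by ring

private lemma osc_sin {q : ℝ → ℝ} (hq : ContDiffOn ℝ 1 q (Set.Icc 0 1)) {Mq Mq' : ℝ}
    (hMq : ∀ t ∈ Set.Icc (0:ℝ) 1, |q t| ≤ Mq)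
    (hMq' : ∀ t ∈ Set.Icc (0:ℝ) 1, |derivWithin q (Set.Icc 0 1) t| ≤ Mq')
    {r : ℝ} (hr0 : 0 < |r|) {x : ℝ} (hx : x ∈ Set.Icc (0:ℝ) 1) :
    |∫ t in (0:ℝ)..x, q t * Real.sin (2*r*t)| ≤ (2*Mq + Mq')/(2*|r|) := by
  have hMq0 : 0 ≤ Mq := le_trans (abs_nonneg _) (hMq 0 (by norm_num))
  have hMq'0 : 0 ≤ Mq' := le_trans (abs_nonneg _) (hMq' 0 (by norm_num))
  have hrne : r ≠ 0 := fun hh => by simp [hh] at hr0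
  set q' := derivWithin q (Set.Icc (0:ℝ) 1) with hq'def
  have hq'cont : ContinuousOn q' (Set.Icc 0 1) :=
    hq.continuousOn_derivWithin (uniqueDiffOn_Icc (by norm_num)) le_rfl
  have hqcont : ContinuousOn q (Set.Icc 0 1) := hq.continuousOn
  have hsub : Set.Icc (0:ℝ) x ⊆ Set.Icc 0 1 := Set.Icc_subset_Icc le_rfl hx.2
  set Φ : ℝ → ℝ := fun t => -(q t * Real.cos (2*r*t)) / (2*r) with hΦdef
  have hder : ∀ t ∈ Set.Ioo (0:ℝ) x, HasDerivAt Φ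
      (-(q' t * Real.cos (2*r*t)) / (2*r) + q t * Real.sin (2*r*t)) t := by
    intro t ht
    have htI : t ∈ Set.Icc (0:ℝ) 1 := hsub ⟨le_of_lt ht.1, le_of_lt ht.2⟩
    have hmem : Set.Icc (0:ℝ) 1 ∈ nhds t := Icc_mem_nhds ht.1 (lt_of_lt_of_le ht.2 hx.2)
    have hqd : HasDerivAt q (q' t) t :=
      ((hq.differentiableOn one_ne_zero t htI).hasDerivWithinAt).hasDerivAt hmem
    have hs : HasDerivAt (fun t : ℝ => Real.cos (2*r*t)) (-(2*r*Real.sin (2*r*t))) t := by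
      have := (Real.hasDerivAt_cos (2*r*t)).comp t ((hasDerivAt_id t).const_mul (2*r))
      simp only [mul_one, Function.comp_def] at this
      exact this.congr_deriv (by ring)
    have := (((hqd.mul hs)).div_const (2*r)).neg
    refine (this.congr_deriv ?_).congr_of_eventuallyEq (Filter.Eventually.of_forall fun s => ?_)
    · field_simp
      ring_nf
    · simp only [hΦdef, Pi.neg_apply, Pi.mul_apply]
      ring
  have hint' : IntervalIntegrable (fun t => -(q' t * Real.cos (2*r*t)) / (2*r))
      MeasureTheory.volume 0 x := by
    apply ContinuousOn.intervalIntegrable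
    rw [Set.uIcc_of_le hx.1]
    exact ((((hq'cont.mono hsub).mul
      (Real.continuous_cos.comp (continuous_const.mul continuous_id)).continuousOn)).neg.div_const _)
  have hints : IntervalIntegrable (fun t => q t * Real.sin (2*r*t))
      MeasureTheory.volume 0 x := by
    apply ContinuousOn.intervalIntegrable
    rw [Set.uIcc_of_le hx.1]
    exact ((hqcont.mono hsub).mul
      (Real.continuous_sin.comp (continuous_const.mul continuous_id)).continuousOn)
  have key : ∫ t in (0:ℝ)..x, (-(q' t * Real.cos (2*r*t)) / (2*r) + q t * Real.sin (2*r*t))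
      = Φ x - Φ 0 := by
    apply intervalIntegral.integral_eq_sub_of_hasDeriv_right_of_le hx.1
    · exact (((hqcont.mono hsub).mul
        (Real.continuous_cos.comp (continuous_const.mul continuous_id)).continuousOn)).neg.div_const _
    · exact fun t ht => (hder t ht).hasDerivWithinAt
    · exact hint'.add hints
  rw [intervalIntegral.integral_add hint' hints] at key
  have hΦb : ∀ t ∈ Set.Icc (0:ℝ) 1, |Φ t| ≤ Mq / (2*|r|) := by
    intro t ht
    rw [hΦdef]
    simp only
    rw [abs_div, abs_neg, abs_mul, abs_mul, abs_two]
    gcongr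
    calc |q t| * |Real.cos (2*r*t)| ≤ Mq * 1 :=
        mul_le_mul (hMq t ht) (Real.abs_cos_le_one _) (abs_nonneg _) hMq0
      _ = Mq := mul_one _
  have hq'int : |∫ t in (0:ℝ)..x, -(q' t * Real.cos (2*r*t)) / (2*r)| ≤ Mq' / (2*|r|) := by
    have := intervalIntegral.norm_integral_le_of_norm_le_const
      (C := Mq' / (2*|r|)) (a := (0:ℝ)) (b := x)
      (f := fun t => -(q' t * Real.cos (2*r*t)) / (2*r)) ?_
    · rw [Real.norm_eq_abs] at this
      refine this.trans ?_
      rw [sub_zero, abs_of_nonneg hx.1]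
      nlinarith [hx.2, div_nonneg hMq'0 (by positivity : (0:ℝ) ≤ 2*|r|)]
    · intro t ht
      rw [Set.uIoc_of_le hx.1] at ht
      have ht' : t ∈ Set.Icc (0:ℝ) 1 := ⟨le_of_lt ht.1, le_trans ht.2 hx.2⟩
      rw [Real.norm_eq_abs, abs_div, abs_neg, abs_mul, abs_mul, abs_two]
      gcongr
      calc |q' t| * |Real.cos (2*r*t)| ≤ Mq' * 1 :=
          mul_le_mul (hMq' t ht') (Real.abs_cos_le_one _) (abs_nonneg _) hMq'0
        _ = Mq' := mul_one _
  have hfin : ∫ t in (0:ℝ)..x, q t * Real.sin (2*r*t)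
      = Φ x - Φ 0 - ∫ t in (0:ℝ)..x, -(q' t * Real.cos (2*r*t)) / (2*r) := by
    linarith
  rw [hfin]
  calc |Φ x - Φ 0 - ∫ t in (0:ℝ)..x, -(q' t * Real.cos (2*r*t)) / (2*r)|
      ≤ |Φ x - Φ 0| + |∫ t in (0:ℝ)..x, -(q' t * Real.cos (2*r*t)) / (2*r)| := abs_sub _ _
    _ ≤ (|Φ x| + |Φ 0|) + Mq'/(2*|r|) := add_le_add (abs_sub _ _) hq'int
    _ ≤ (Mq/(2*|r|) + Mq/(2*|r|)) + Mq'/(2*|r|) := by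
        have h1 := hΦb x hx
        have h2 := hΦb 0 (by norm_num)
        linarith
    _ = (2*Mq + Mq')/(2*|r|) := by ring

private lemma ccos_eq (r t : ℝ) : Complex.cos ((r:ℂ)*t) = ((Real.cos (r*t) : ℝ) : ℂ) := by
  rw [Complex.ofReal_cos, Complex.ofReal_mul]

private lemma csin_eq (r t : ℝ) : Complex.sin ((r:ℂ)*t) = ((Real.sin (r*t) : ℝ) : ℂ) := by
  rw [Complex.ofReal_sin, Complex.ofReal_mul]

private lemma S_asym {q : ℝ → ℝ} (hqc : ContinuousOn q (Set.Icc 0 1)) {Mq : ℝ}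
    (hMq : ∀ t ∈ Set.Icc (0:ℝ) 1, |q t| ≤ Mq) {r : ℝ} (hr : 4*(Mq+1) ≤ |r|)
    {y y' : ℝ → ℂ} (hy : IsSLSolution q (((r:ℂ))^2) y y')
    (hy0 : y 0 = 0) (hy'0 : y' 0 = 1) :
    (∀ x ∈ Set.Icc (0:ℝ) 1, ‖y x‖ ≤ 2/|r|) ∧
    (∀ x ∈ Set.Icc (0:ℝ) 1,
      ‖y x - Complex.sin ((r:ℂ)*x)/r‖ ≤ 4*Mq/r^2) := by
  have hsup := sl_sup hqc hMq hr hy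
  rw [hy0, hy'0] at hsup
  constructor
  · intro x hx
    refine le_trans (hsup.1 x hx) (le_of_eq ?_)
    rw [norm_zero, norm_one, zero_add]
    ring
  · intro x hx
    refine le_trans (le_of_eq ?_) (le_trans (hsup.2 x hx) (le_of_eq ?_))
    · congr 1
      ring
    · rw [norm_zero, norm_one, zero_add,
        show 4*Mq*(1/|r|)/|r| = 4*Mq/|r|^2 by ring, sq_abs]

private lemma C_asym {q : ℝ → ℝ} (hq : ContDiffOn ℝ 1 q (Set.Icc 0 1)) {Mq Mq' : ℝ}
    (hMq : ∀ t ∈ Set.Icc (0:ℝ) 1, |q t| ≤ Mq)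
    (hMq' : ∀ t ∈ Set.Icc (0:ℝ) 1, |derivWithin q (Set.Icc 0 1) t| ≤ Mq')
    {r : ℝ} (hr : 4*(Mq+1) ≤ |r|) {y y' : ℝ → ℂ}
    (hy : IsSLSolution q (((r:ℂ))^2) y y') (hy0 : y 0 = 1) (hy'0 : y' 0 = 0) :
    (∀ x ∈ Set.Icc (0:ℝ) 1, ‖y x‖ ≤ 2) ∧
    (∀ x ∈ Set.Icc (0:ℝ) 1, ‖y x - Complex.cos ((r:ℂ)*x)‖ ≤ 4*Mq/|r|) ∧
    (∀ x ∈ Set.Icc (0:ℝ) 1,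
      ‖y x - Complex.cos ((r:ℂ)*x) -
        ((((1:ℝ)/2) * ∫ t in (0:ℝ)..x, q t : ℝ):ℂ) * Complex.sin ((r:ℂ)*x) / r‖ ≤
        ((3*Mq + 2*Mq')/4 + 8*Mq^2)/r^2) := by
  have hMq0 : 0 ≤ Mq := le_trans (abs_nonneg _) (hMq 0 (by norm_num))
  have hMq'0 : 0 ≤ Mq' := le_trans (abs_nonneg _) (hMq' 0 (by norm_num))
  have hr0 : (0:ℝ) < |r| := lt_of_lt_of_le (by positivity) hr
  have hrne : r ≠ 0 := fun hh => by simp [hh] at hr0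
  have hqc : ContinuousOn q (Set.Icc 0 1) := hq.continuousOn
  have hsup := sl_sup hqc hMq hr hy
  rw [hy0, hy'0] at hsup
  have hb2 : ∀ x ∈ Set.Icc (0:ℝ) 1, ‖y x‖ ≤ 2 := by
    intro x hx
    refine le_trans (hsup.1 x hx) (le_of_eq ?_)
    rw [norm_one, norm_zero, zero_div, add_zero]
    ring
  have hcr : ∀ x ∈ Set.Icc (0:ℝ) 1, ‖y x - Complex.cos ((r:ℂ)*x)‖ ≤ 4*Mq/|r| := by
    intro x hx
    refine le_trans (le_of_eq ?_) (le_trans (hsup.2 x hx) (le_of_eq ?_))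
    · congr 1
      ring
    · rw [norm_one, norm_zero, zero_div, add_zero, mul_one]
  refine ⟨hb2, hcr, ?_⟩
  intro x hx
  have hycont : ContinuousOn y (Set.Icc 0 1) := slsol_cont hy
  have hsub : Set.Icc (0:ℝ) x ⊆ Set.Icc 0 1 := Set.Icc_subset_Icc le_rfl hx.2
  have hrepx := sl_rep hqc hrne hy x hx
  rw [hy0, hy'0] at hrepx
  -- integrability facts on [0,x]
  have hqxc : ContinuousOn (fun t => (q t : ℂ)) (Set.Icc 0 x) :=
    (Complex.continuous_ofReal.comp_continuousOn hqc).mono hsub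
  have hyc : ContinuousOn y (Set.Icc 0 x) := hycont.mono hsub
  have int_qyc : IntervalIntegrable (fun t => (q t:ℂ) * y t * Complex.cos ((r:ℂ)*t))
      MeasureTheory.volume 0 x := by
    apply ContinuousOn.intervalIntegrable
    rw [Set.uIcc_of_le hx.1]
    exact (hqxc.mul hyc).mul (cont_ccos r).continuousOn
  have int_qys : IntervalIntegrable (fun t => (q t:ℂ) * y t * Complex.sin ((r:ℂ)*t))
      MeasureTheory.volume 0 x := by
    apply ContinuousOn.intervalIntegrable
    rw [Set.uIcc_of_le hx.1]
    exact (hqxc.mul hyc).mul (cont_csin r).continuousOn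
  have int_qcc : IntervalIntegrable (fun t => (q t:ℂ) * Complex.cos ((r:ℂ)*t) * Complex.cos ((r:ℂ)*t))
      MeasureTheory.volume 0 x := by
    apply ContinuousOn.intervalIntegrable
    rw [Set.uIcc_of_le hx.1]
    exact (hqxc.mul (cont_ccos r).continuousOn).mul (cont_ccos r).continuousOn
  have int_qcs : IntervalIntegrable (fun t => (q t:ℂ) * Complex.cos ((r:ℂ)*t) * Complex.sin ((r:ℂ)*t))
      MeasureTheory.volume 0 x := by
    apply ContinuousOn.intervalIntegrable
    rw [Set.uIcc_of_le hx.1]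
    exact (hqxc.mul (cont_ccos r).continuousOn).mul (cont_csin r).continuousOn
  have int_rem_c : IntervalIntegrable
      (fun t => (q t:ℂ) * (y t - Complex.cos ((r:ℂ)*t)) * Complex.cos ((r:ℂ)*t))
      MeasureTheory.volume 0 x := by
    apply ContinuousOn.intervalIntegrable
    rw [Set.uIcc_of_le hx.1]
    exact (hqxc.mul (hyc.sub (cont_ccos r).continuousOn)).mul (cont_ccos r).continuousOn
  have int_rem_s : IntervalIntegrable
      (fun t => (q t:ℂ) * (y t - Complex.cos ((r:ℂ)*t)) * Complex.sin ((r:ℂ)*t))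
      MeasureTheory.volume 0 x := by
    apply ContinuousOn.intervalIntegrable
    rw [Set.uIcc_of_le hx.1]
    exact (hqxc.mul (hyc.sub (cont_ccos r).continuousOn)).mul (cont_csin r).continuousOn
  -- bounds on the remainder integrals
  have rem_bound : ∀ g : ℝ → ℂ, (∀ t, ‖g t‖ ≤ 1) →
      IntervalIntegrable (fun t => (q t:ℂ) * (y t - Complex.cos ((r:ℂ)*t)) * g t)
        MeasureTheory.volume 0 x →
      ‖∫ t in (0:ℝ)..x, (q t:ℂ) * (y t - Complex.cos ((r:ℂ)*t)) * g t‖ ≤ 4*Mq^2/|r| := by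
    intro g hg _
    have := intervalIntegral.norm_integral_le_of_norm_le_const
      (C := Mq * (4*Mq/|r|)) (a := (0:ℝ)) (b := x)
      (f := fun t => (q t:ℂ) * (y t - Complex.cos ((r:ℂ)*t)) * g t) ?_
    · refine le_trans this ?_
      have hB : |x - 0| ≤ 1 := by rw [sub_zero, abs_of_nonneg hx.1]; exact hx.2
      calc Mq * (4*Mq/|r|) * |x-0| ≤ Mq * (4*Mq/|r|) * 1 :=
            mul_le_mul_of_nonneg_left hB (by positivity)
        _ = 4*Mq^2/|r| := by ring
    · intro t ht
      rw [Set.uIoc_of_le hx.1] at ht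
      have ht' : t ∈ Set.Icc (0:ℝ) 1 := ⟨le_of_lt ht.1, le_trans ht.2 hx.2⟩
      rw [norm_mul, norm_mul, Complex.norm_real, Real.norm_eq_abs]
      calc |q t| * ‖y t - Complex.cos ((r:ℂ)*t)‖ * ‖g t‖ ≤ Mq * (4*Mq/|r|) * 1 :=
          mul_le_mul (mul_le_mul (hMq t ht') (hcr t ht') (norm_nonneg _) hMq0)
            (hg t) (norm_nonneg _) (by positivity)
        _ = Mq * (4*Mq/|r|) := mul_one _
  -- main J estimates
  set J1 := ∫ t in (0:ℝ)..x, (q t:ℂ) * y t * Complex.cos ((r:ℂ)*t) with hJ1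
  set J2 := ∫ t in (0:ℝ)..x, (q t:ℂ) * y t * Complex.sin ((r:ℂ)*t) with hJ2
  set Qx : ℝ := (1/2) * ∫ t in (0:ℝ)..x, q t with hQxdef
  have int_half : IntervalIntegrable (fun t => q t / 2) MeasureTheory.volume 0 x := by
    apply ContinuousOn.intervalIntegrable
    rw [Set.uIcc_of_le hx.1]
    exact (hqc.mono hsub).div_const _
  have int_c2 : IntervalIntegrable (fun t => q t * Real.cos (2*r*t) / 2)
      MeasureTheory.volume 0 x := by
    apply ContinuousOn.intervalIntegrable
    rw [Set.uIcc_of_le hx.1]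
    exact ((hqc.mono hsub).mul
      (Real.continuous_cos.comp (continuous_const.mul continuous_id)).continuousOn).div_const _
  have split1 : J1 = (∫ t in (0:ℝ)..x, (q t:ℂ) * Complex.cos ((r:ℂ)*t) * Complex.cos ((r:ℂ)*t))
      + ∫ t in (0:ℝ)..x, (q t:ℂ) * (y t - Complex.cos ((r:ℂ)*t)) * Complex.cos ((r:ℂ)*t) := by
    rw [hJ1, ← intervalIntegral.integral_add int_qcc int_rem_c]
    apply intervalIntegral.integral_congr
    intro t _
    ring
  have split2 : J2 = (∫ t in (0:ℝ)..x, (q t:ℂ) * Complex.cos ((r:ℂ)*t) * Complex.sin ((r:ℂ)*t))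
      + ∫ t in (0:ℝ)..x, (q t:ℂ) * (y t - Complex.cos ((r:ℂ)*t)) * Complex.sin ((r:ℂ)*t) := by
    rw [hJ2, ← intervalIntegral.integral_add int_qcs int_rem_s]
    apply intervalIntegral.integral_congr
    intro t _
    ring
  have real_cc : ∫ t in (0:ℝ)..x, q t * (Real.cos (r*t))^2
      = Qx + (1/2) * ∫ t in (0:ℝ)..x, q t * Real.cos (2*r*t) := by
    have e : ∫ t in (0:ℝ)..x, q t * (Real.cos (r*t))^2
        = ∫ t in (0:ℝ)..x, (q t / 2 + q t * Real.cos (2*r*t) / 2) := by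
      apply intervalIntegral.integral_congr
      intro t _
      show q t * (Real.cos (r*t))^2 = q t / 2 + q t * Real.cos (2*r*t) / 2
      rw [Real.cos_sq, show 2*(r*t) = 2*r*t by ring]
      ring
    rw [e, intervalIntegral.integral_add int_half int_c2,
      intervalIntegral.integral_div, intervalIntegral.integral_div, hQxdef]
    ring
  have e_cc : (∫ t in (0:ℝ)..x, (q t:ℂ) * Complex.cos ((r:ℂ)*t) * Complex.cos ((r:ℂ)*t))
      = ((Qx + (1/2) * ∫ t in (0:ℝ)..x, q t * Real.cos (2*r*t) : ℝ) : ℂ) := by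
    calc (∫ t in (0:ℝ)..x, (q t:ℂ) * Complex.cos ((r:ℂ)*t) * Complex.cos ((r:ℂ)*t))
        = ∫ t in (0:ℝ)..x, ((q t * (Real.cos (r*t))^2 : ℝ) : ℂ) := by
          apply intervalIntegral.integral_congr
          intro t _
          show (q t:ℂ) * Complex.cos ((r:ℂ)*t) * Complex.cos ((r:ℂ)*t)
            = ((q t * (Real.cos (r*t))^2 : ℝ) : ℂ)
          rw [ccos_eq]
          push_cast
          ring
      _ = ((∫ t in (0:ℝ)..x, q t * (Real.cos (r*t))^2 : ℝ) : ℂ) :=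
          intervalIntegral.integral_ofReal
      _ = _ := by rw [real_cc]
  have real_cs : ∫ t in (0:ℝ)..x, q t * (Real.sin (2*r*t) / 2)
      = (1/2) * ∫ t in (0:ℝ)..x, q t * Real.sin (2*r*t) := by
    have e : ∫ t in (0:ℝ)..x, q t * (Real.sin (2*r*t)/2)
        = ∫ t in (0:ℝ)..x, (q t * Real.sin (2*r*t)) / 2 := by
      apply intervalIntegral.integral_congr
      intro t _
      ring
    rw [e, intervalIntegral.integral_div]
    ring
  have e_cs : (∫ t in (0:ℝ)..x, (q t:ℂ) * Complex.cos ((r:ℂ)*t) * Complex.sin ((r:ℂ)*t))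
      = (((1/2) * ∫ t in (0:ℝ)..x, q t * Real.sin (2*r*t) : ℝ) : ℂ) := by
    calc (∫ t in (0:ℝ)..x, (q t:ℂ) * Complex.cos ((r:ℂ)*t) * Complex.sin ((r:ℂ)*t))
        = ∫ t in (0:ℝ)..x, ((q t * (Real.sin (2*r*t)/2) : ℝ) : ℂ) := by
          apply intervalIntegral.integral_congr
          intro t _
          show (q t:ℂ) * Complex.cos ((r:ℂ)*t) * Complex.sin ((r:ℂ)*t)
            = ((q t * (Real.sin (2*r*t)/2) : ℝ) : ℂ)
          rw [ccos_eq, csin_eq, show Real.sin (2*r*t) = 2 * Real.sin (r*t) * Real.cos (r*t) by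
            rw [show 2*r*t = 2*(r*t) by ring, Real.sin_two_mul]]
          push_cast
          ring
      _ = ((∫ t in (0:ℝ)..x, q t * (Real.sin (2*r*t)/2) : ℝ) : ℂ) :=
          intervalIntegral.integral_ofReal
      _ = _ := by rw [real_cs]
  have hJ1b : ‖J1 - (Qx:ℂ)‖ ≤ (Mq+Mq')/(4*|r|) + 4*Mq^2/|r| := by
    rw [split1, e_cc, Complex.ofReal_add]
    have h1 : ‖(((1/2) * ∫ t in (0:ℝ)..x, q t * Real.cos (2*r*t) : ℝ) : ℂ)‖
        ≤ (Mq+Mq')/(4*|r|) := by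
      rw [Complex.norm_real, Real.norm_eq_abs, abs_mul]
      calc |(1:ℝ)/2| * |∫ t in (0:ℝ)..x, q t * Real.cos (2*r*t)|
          ≤ |(1:ℝ)/2| * ((Mq + Mq')/(2*|r|)) := by
            apply mul_le_mul_of_nonneg_left (osc_cos hq hMq hMq' hr0 hx) (abs_nonneg _)
        _ = (Mq+Mq')/(4*|r|) := by rw [abs_of_nonneg (by norm_num : (0:ℝ) ≤ 1/2)]; ring
    have h2 := rem_bound _ (norm_ccos_le r) int_rem_c
    calc ‖(Qx:ℂ) + (((1/2) * ∫ t in (0:ℝ)..x, q t * Real.cos (2*r*t) : ℝ) : ℂ)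
          + (∫ t in (0:ℝ)..x, (q t:ℂ) * (y t - Complex.cos ((r:ℂ)*t)) * Complex.cos ((r:ℂ)*t))
          - (Qx:ℂ)‖
        = ‖(((1/2) * ∫ t in (0:ℝ)..x, q t * Real.cos (2*r*t) : ℝ) : ℂ)
          + (∫ t in (0:ℝ)..x, (q t:ℂ) * (y t - Complex.cos ((r:ℂ)*t)) * Complex.cos ((r:ℂ)*t))‖ := by
          congr 1
          ring
      _ ≤ _ := le_trans (norm_add_le _ _) (add_le_add h1 h2)
  have hJ2b : ‖J2‖ ≤ (2*Mq+Mq')/(4*|r|) + 4*Mq^2/|r| := by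
    rw [split2, e_cs]
    have h1 : ‖(((1/2) * ∫ t in (0:ℝ)..x, q t * Real.sin (2*r*t) : ℝ) : ℂ)‖
        ≤ (2*Mq+Mq')/(4*|r|) := by
      rw [Complex.norm_real, Real.norm_eq_abs, abs_mul]
      calc |(1:ℝ)/2| * |∫ t in (0:ℝ)..x, q t * Real.sin (2*r*t)|
          ≤ |(1:ℝ)/2| * ((2*Mq + Mq')/(2*|r|)) := by
            apply mul_le_mul_of_nonneg_left (osc_sin hq hMq hMq' hr0 hx) (abs_nonneg _)
        _ = (2*Mq+Mq')/(4*|r|) := by rw [abs_of_nonneg (by norm_num : (0:ℝ) ≤ 1/2)]; ring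
    have h2 := rem_bound _ (norm_csin_le r) int_rem_s
    exact le_trans (norm_add_le _ _) (add_le_add h1 h2)
  have hkey : y x - Complex.cos ((r:ℂ)*x) - (Qx:ℂ) * Complex.sin ((r:ℂ)*x)/r
      = (1/(r:ℂ)) * (Complex.sin ((r:ℂ)*x) * (J1 - (Qx:ℂ)) - Complex.cos ((r:ℂ)*x) * J2) := by
    linear_combination hrepx
  rw [hQxdef] at hkey
  rw [hkey, norm_mul]
  have hn : ‖(1/(r:ℂ))‖ = 1/|r| := by
    rw [norm_div, norm_one, Complex.norm_real, Real.norm_eq_abs]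
  rw [hn]
  have hd : ‖Complex.sin ((r:ℂ)*x) * (J1 - (Qx:ℂ)) - Complex.cos ((r:ℂ)*x) * J2‖
      ≤ ((Mq+Mq')/(4*|r|) + 4*Mq^2/|r|) + ((2*Mq+Mq')/(4*|r|) + 4*Mq^2/|r|) := by
    refine le_trans (norm_sub_le _ _) (add_le_add ?_ ?_)
    · refine le_trans (norm_mul_le _ _) ?_
      refine le_trans (mul_le_mul (norm_csin_le r x) hJ1b (norm_nonneg _) zero_le_one) ?_
      rw [one_mul]
    · refine le_trans (norm_mul_le _ _) ?_
      refine le_trans (mul_le_mul (norm_ccos_le r x) hJ2b (norm_nonneg _) zero_le_one) ?_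
      rw [one_mul]
  calc 1/|r| * ‖Complex.sin ((r:ℂ)*x) * (J1 - (Qx:ℂ)) - Complex.cos ((r:ℂ)*x) * J2‖
      ≤ 1/|r| * (((Mq+Mq')/(4*|r|) + 4*Mq^2/|r|) + ((2*Mq+Mq')/(4*|r|) + 4*Mq^2/|r|)) :=
        mul_le_mul_of_nonneg_left hd (by positivity)
    _ = ((3*Mq + 2*Mq')/4 + 8*Mq^2)/r^2 := by
        field_simp
        linear_combination (-(3*Mq + 2*Mq' + 32*Mq^2)) * sq_abs r

private lemma main_est {q : ℝ → ℝ} (hq : ContDiffOn ℝ 1 q (Set.Icc 0 1))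
    (h γ0 ξ0 : ℝ) (hξ0 : ξ0 ∈ Set.Icc (0:ℝ) 1)
    {C C' S S' : ℂ → ℝ → ℂ}
    (hsolC : ∀ lam : ℂ, IsSLSolution q lam (C lam) (C' lam))
    (hC0 : ∀ lam : ℂ, C lam 0 = 1) (hC'0 : ∀ lam : ℂ, C' lam 0 = 0)
    (hsolS : ∀ lam : ℂ, IsSLSolution q lam (S lam) (S' lam))
    (hS0 : ∀ lam : ℂ, S lam 0 = 0) (hS'0 : ∀ lam : ℂ, S' lam 0 = 1) :
    ∃ M R : ℝ, 0 < M ∧ 1 ≤ R ∧ ∀ r : ℝ, R ≤ |r| → ∀ x ∈ Set.Icc (0:ℝ) 1,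
      ‖((1:ℂ) - (γ0:ℂ) * S ((r:ℂ)^2) ξ0) * C ((r:ℂ)^2) x
        - ((h:ℂ)*1 - (γ0:ℂ) * C ((r:ℂ)^2) ξ0) * S ((r:ℂ)^2) x
        - (Complex.cos ((r:ℂ)*x)
          + (((1/2) * (∫ t in (0:ℝ)..x, q t) - h : ℝ):ℂ)/(r:ℂ) * Complex.sin ((r:ℂ)*x)
          + (γ0:ℂ)/(r:ℂ) * Complex.sin ((r:ℂ) * ((x - ξ0 : ℝ):ℂ)))‖ ≤ M / r^2 := by
  obtain ⟨M1, hM1'⟩ := isCompact_Icc.exists_bound_of_continuousOn hq.continuousOn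
  obtain ⟨M2, hM2'⟩ := isCompact_Icc.exists_bound_of_continuousOn
    (hq.continuousOn_derivWithin (uniqueDiffOn_Icc one_pos) le_rfl)
  have hMq : ∀ t ∈ Set.Icc (0:ℝ) 1, |q t| ≤ M1 := by
    intro t ht; rw [← Real.norm_eq_abs]; exact hM1' t ht
  have hMq' : ∀ t ∈ Set.Icc (0:ℝ) 1, |derivWithin q (Set.Icc 0 1) t| ≤ M2 := by
    intro t ht; rw [← Real.norm_eq_abs]; exact hM2' t ht
  have hMq0 : 0 ≤ M1 := le_trans (abs_nonneg _) (hMq 0 (by norm_num))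
  have hMq'0 : 0 ≤ M2 := le_trans (abs_nonneg _) (hMq' 0 (by norm_num))
  set A : ℝ := (3*M1 + 2*M2)/4 + 8*M1^2 with hAdef
  have hA0 : 0 ≤ A := by rw [hAdef]; positivity
  refine ⟨A + 24* |γ0| *M1 + 4* |h| *M1 + 1, 4*(M1+1), by positivity, by linarith, ?_⟩
  intro r hrR x hx
  have hr0 : (0:ℝ) < |r| := lt_of_lt_of_le (by positivity) hrR
  have hrne : r ≠ 0 := fun hh => by simp [hh] at hr0
  have hr2 : (0:ℝ) < r^2 := by rw [← sq_abs]; positivity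
  obtain ⟨hCb, hCcr, hCasym⟩ :=
    C_asym hq hMq hMq' hrR (hsolC ((r:ℂ)^2)) (hC0 _) (hC'0 _)
  obtain ⟨hSb, hSasym⟩ :=
    S_asym hq.continuousOn hMq hrR (hsolS ((r:ℂ)^2)) (hS0 _) (hS'0 _)
  set lam : ℂ := ((r:ℂ))^2 with hlamdef
  set E1 : ℂ := C lam x - Complex.cos ((r:ℂ)*x) -
    ((((1:ℝ)/2) * ∫ t in (0:ℝ)..x, q t : ℝ):ℂ) * Complex.sin ((r:ℂ)*x) / r with hE1
  set E2 : ℂ := (S lam ξ0 - Complex.sin ((r:ℂ)*ξ0)/r) * C lam x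
    + (Complex.sin ((r:ℂ)*ξ0)/r) * (C lam x - Complex.cos ((r:ℂ)*x)) with hE2
  set E3 : ℂ := S lam x - Complex.sin ((r:ℂ)*x)/r with hE3
  set E4 : ℂ := (C lam ξ0 - Complex.cos ((r:ℂ)*ξ0)) * S lam x
    + Complex.cos ((r:ℂ)*ξ0) * (S lam x - Complex.sin ((r:ℂ)*x)/r) with hE4
  have hid : ((1:ℂ) - (γ0:ℂ) * S lam ξ0) * C lam x
        - ((h:ℂ)*1 - (γ0:ℂ) * C lam ξ0) * S lam x
        - (Complex.cos ((r:ℂ)*x)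
          + (((1/2) * (∫ t in (0:ℝ)..x, q t) - h : ℝ):ℂ)/(r:ℂ) * Complex.sin ((r:ℂ)*x)
          + (γ0:ℂ)/(r:ℂ) * Complex.sin ((r:ℂ) * ((x - ξ0 : ℝ):ℂ)))
      = E1 - (γ0:ℂ)*E2 - (h:ℂ)*E3 + (γ0:ℂ)*E4 := by
    rw [show (r:ℂ) * ((x - ξ0 : ℝ):ℂ) = (r:ℂ)*x - (r:ℂ)*ξ0 by push_cast; ring,
      Complex.sin_sub, hE1, hE2, hE3, hE4]
    push_cast
    ring
  have n1 : ‖E1‖ ≤ A/r^2 := hCasym x hx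
  have n2 : ‖E2‖ ≤ 12*M1/r^2 := by
    have t1 : ‖(S lam ξ0 - Complex.sin ((r:ℂ)*ξ0)/r) * C lam x‖ ≤ (4*M1/r^2)*2 := by
      rw [norm_mul]
      exact mul_le_mul (hSasym ξ0 hξ0) (hCb x hx) (norm_nonneg _) (by positivity)
    have t2 : ‖(Complex.sin ((r:ℂ)*ξ0)/r) * (C lam x - Complex.cos ((r:ℂ)*x))‖
        ≤ (1/|r|)*(4*M1/|r|) := by
      rw [norm_mul]
      refine mul_le_mul ?_ (hCcr x hx) (norm_nonneg _) (by positivity)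
      rw [norm_div, Complex.norm_real, Real.norm_eq_abs]
      gcongr
      exact norm_csin_le r ξ0
    have e2 : (1/|r|)*(4*M1/|r|) = 4*M1/r^2 := by rw [← sq_abs r]; ring
    rw [e2] at t2
    refine le_trans (norm_add_le _ _) ?_
    calc ‖(S lam ξ0 - Complex.sin ((r:ℂ)*ξ0)/r) * C lam x‖
          + ‖(Complex.sin ((r:ℂ)*ξ0)/r) * (C lam x - Complex.cos ((r:ℂ)*x))‖
        ≤ (4*M1/r^2)*2 + 4*M1/r^2 := add_le_add t1 t2
      _ = 12*M1/r^2 := by ring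
  have n3 : ‖E3‖ ≤ 4*M1/r^2 := hSasym x hx
  have n4 : ‖E4‖ ≤ 12*M1/r^2 := by
    have t1 : ‖(C lam ξ0 - Complex.cos ((r:ℂ)*ξ0)) * S lam x‖ ≤ (4*M1/|r|)*(2/|r|) := by
      rw [norm_mul]
      exact mul_le_mul (hCcr ξ0 hξ0) (hSb x hx) (norm_nonneg _) (by positivity)
    have t2 : ‖Complex.cos ((r:ℂ)*ξ0) * (S lam x - Complex.sin ((r:ℂ)*x)/r)‖
        ≤ 1 * (4*M1/r^2) := by
      rw [norm_mul]
      exact mul_le_mul (norm_ccos_le r ξ0) (hSasym x hx) (norm_nonneg _) zero_le_one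
    have e1 : (4*M1/|r|)*(2/|r|) = 8*M1/r^2 := by rw [← sq_abs r]; ring
    rw [e1] at t1
    refine le_trans (norm_add_le _ _) ?_
    calc ‖(C lam ξ0 - Complex.cos ((r:ℂ)*ξ0)) * S lam x‖
          + ‖Complex.cos ((r:ℂ)*ξ0) * (S lam x - Complex.sin ((r:ℂ)*x)/r)‖
        ≤ 8*M1/r^2 + 1*(4*M1/r^2) := add_le_add t1 t2
      _ = 12*M1/r^2 := by ring
  rw [hid]
  have ng : ∀ E : ℂ, ‖(γ0:ℂ)*E‖ = |γ0| * ‖E‖ := by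
    intro E; rw [norm_mul, Complex.norm_real, Real.norm_eq_abs]
  have nh : ‖(h:ℂ)*E3‖ = |h| * ‖E3‖ := by
    rw [norm_mul, Complex.norm_real, Real.norm_eq_abs]
  have a1 := norm_add_le (E1 - (γ0:ℂ)*E2 - (h:ℂ)*E3) ((γ0:ℂ)*E4)
  have a2 := norm_sub_le (E1 - (γ0:ℂ)*E2) ((h:ℂ)*E3)
  have a3 := norm_sub_le E1 ((γ0:ℂ)*E2)
  rw [ng E2] at a3
  rw [nh] at a2
  rw [ng E4] at a1
  have c2 : |γ0| * ‖E2‖ ≤ |γ0| * (12*M1/r^2) := mul_le_mul_of_nonneg_left n2 (abs_nonneg _)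
  have c3 : |h| * ‖E3‖ ≤ |h| * (4*M1/r^2) := mul_le_mul_of_nonneg_left n3 (abs_nonneg _)
  have c4 : |γ0| * ‖E4‖ ≤ |γ0| * (12*M1/r^2) := mul_le_mul_of_nonneg_left n4 (abs_nonneg _)
  have step : ‖E1 - (γ0:ℂ)*E2 - (h:ℂ)*E3 + (γ0:ℂ)*E4‖
      ≤ (A + 24* |γ0| *M1 + 4* |h| *M1)/r^2 := by
    have : A/r^2 + |γ0| *(12*M1/r^2) + |h| *(4*M1/r^2) + |γ0| *(12*M1/r^2)
        = (A + 24* |γ0| *M1 + 4* |h| *M1)/r^2 := by ring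
    linarith
  refine le_trans step ?_
  exact (div_le_div_iff_of_pos_right hr2).mpr (by linarith)

/-- Lemma 2, case `h, H ∈ ℝ`: the eigenfunction
`φ(·,λₙ) = U(S(·,λₙ)) C(·,λₙ) - U(C(·,λₙ)) S(·,λₙ)` satisfies, for large `n` and uniformly
for `x ∈ [0,1]`,
`φ(x,λₙ) = cos kₙx + ((Q(x) - h)/kₙ) sin kₙx + (γ₀/kₙ) sin kₙ(x - ξ₀) + O(1/kₙ²)`. -/
theorem stmt_7
    (q : ℝ → ℝ) (hq : ContDiffOn ℝ 1 q (Set.Icc 0 1))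
    (h H γ0 γ1 : ℝ) (hγ0 : γ0 ≠ 0) (hγ1 : γ1 ≠ 0)
    (ξ0 ξ1 : ℚ) (hξ0 : (ξ0:ℝ) ∈ Set.Ioo 0 1) (hξ1 : (ξ1:ℝ) ∈ Set.Ioo 0 1)
    (C C' S S' : ℂ → ℝ → ℂ)
    (hsolC : ∀ lam : ℂ, IsSLSolution q lam (C lam) (C' lam))
    (hC0 : ∀ lam : ℂ, C lam 0 = 1) (hC'0 : ∀ lam : ℂ, C' lam 0 = 0)
    (hsolS : ∀ lam : ℂ, IsSLSolution q lam (S lam) (S' lam))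
    (hS0 : ∀ lam : ℂ, S lam 0 = 0) (hS'0 : ∀ lam : ℂ, S' lam 0 = 1)
    (Δ : ℂ → ℂ)
    (hΔ : ∀ lam : ℂ, Δ lam =
      Uform h γ0 ξ0 (C lam) (C' lam) * Vform H γ1 ξ1 (S lam) (S' lam) -
      Uform h γ0 ξ0 (S lam) (S' lam) * Vform H γ1 ξ1 (C lam) (C' lam))
    (lam : ℕ → ℂ) (hen : EnumeratesZeros Δ lam)
    (hreal : ∀ᶠ n in atTop, (lam n).im = 0)
    (k : ℕ → ℂ) (hk2 : ∀ n, k n ^ 2 = lam n)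
    (hkasym : ∃ (c : ℝ) (N : ℕ), ∀ n ≥ N, ‖k n - ((n * Real.pi : ℝ) : ℂ)‖ ≤ c / n) :
    ∃ (M : ℝ) (N : ℕ), 0 < M ∧ ∀ n ≥ N, ∀ x ∈ Set.Icc (0:ℝ) 1,
      ‖(Uform h γ0 ξ0 (S (lam n)) (S' (lam n)) * C (lam n) x -
          Uform h γ0 ξ0 (C (lam n)) (C' (lam n)) * S (lam n) x) -
        (Complex.cos (k n * (x:ℂ)) +
          (((1/2) * (∫ t in (0:ℝ)..x, q t) - h : ℝ) : ℂ) / k n * Complex.sin (k n * (x:ℂ)) +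
          (γ0:ℂ) / k n * Complex.sin (k n * ((x - ξ0 : ℝ) : ℂ)))‖ ≤
        M / ‖k n‖ ^ 2 := by
  obtain ⟨M, R, hM, hR, hbound⟩ := main_est hq h γ0 ((ξ0:ℚ):ℝ)
    ⟨le_of_lt hξ0.1, le_of_lt hξ0.2⟩ hsolC hC0 hC'0 hsolS hS0 hS'0
  obtain ⟨N0, hN0⟩ := eventually_atTop.mp hreal
  obtain ⟨c, N1, hc⟩ := hkasym
  have hπ : (0:ℝ) < Real.pi := Real.pi_pos
  set N2 : ℕ := ⌈(R + 1 + |c|)/Real.pi⌉₊ + 1 with hN2def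
  refine ⟨M, max (max N0 N1) (max N2 1), hM, ?_⟩
  intro n hn x hx
  have hnN0 : N0 ≤ n := le_trans (le_trans (le_max_left N0 N1) (le_max_left _ _)) hn
  have hnN1 : N1 ≤ n := le_trans (le_trans (le_max_right N0 N1) (le_max_left _ _)) hn
  have hnN2 : N2 ≤ n := le_trans (le_trans (le_max_left N2 1) (le_max_right _ _)) hn
  have hn1 : 1 ≤ n := le_trans (le_trans (le_max_right N2 1) (le_max_right _ _)) hn
  have hn1' : (1:ℝ) ≤ n := by exact_mod_cast hn1
  have hnπ : R + 1 + |c| ≤ n * Real.pi := by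
    have h1 : ((N2:ℕ):ℝ) ≤ (n:ℝ) := Nat.cast_le.mpr hnN2
    have h2 : (R + 1 + |c|)/Real.pi ≤ ((N2:ℕ):ℝ) := by
      refine le_trans (Nat.le_ceil _) ?_
      rw [hN2def]
      push_cast
      linarith
    have h3 : (R + 1 + |c|)/Real.pi ≤ (n:ℝ) := le_trans h2 h1
    calc R + 1 + |c| = ((R + 1 + |c|)/Real.pi) * Real.pi := by field_simp
      _ ≤ (n:ℝ) * Real.pi := mul_le_mul_of_nonneg_right h3 hπ.le
  have hcn : ‖k n - ((n * Real.pi : ℝ):ℂ)‖ ≤ |c| := by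
    refine (hc n hnN1).trans ?_
    calc c/(n:ℝ) ≤ |c|/(n:ℝ) := by gcongr; exact le_abs_self c
      _ ≤ |c| := div_le_self (abs_nonneg c) hn1'
  set a := (k n).re with ha
  have hre : |a - n*Real.pi| ≤ |c| := by
    calc |a - n*Real.pi| = |(k n - ((n*Real.pi:ℝ):ℂ)).re| := by
          rw [Complex.sub_re, Complex.ofReal_re]
      _ ≤ ‖k n - ((n*Real.pi:ℝ):ℂ)‖ := by
          exact Complex.abs_re_le_norm _
      _ ≤ |c| := hcn
  have haR : R + 1 ≤ a := by
    have := abs_le.mp hre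
    linarith [this.1]
  have hapos : 0 < a := by linarith
  have hb0 : (k n).im = 0 := by
    have hlam0 := hN0 n hnN0
    have h2 : (k n ^ 2).im = 2 * a * (k n).im := by
      rw [sq, Complex.mul_im, ← ha]
      ring
    rw [hk2 n, hlam0] at h2
    rcases mul_eq_zero.mp h2.symm with h' | h'
    · nlinarith
    · exact h'
  have hkre : k n = ((a:ℝ):ℂ) := Complex.ext (by rw [Complex.ofReal_re]) (by
    rw [Complex.ofReal_im, hb0])
  have hlamr : lam n = ((a:ℂ))^2 := by rw [← hk2 n, hkre]
  have haabs : R ≤ |a| := by rw [abs_of_pos hapos]; linarith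
  have hU_S : Uform h γ0 ξ0 (S (lam n)) (S' (lam n))
      = 1 - (γ0:ℂ) * S (lam n) ((ξ0:ℚ):ℝ) := by
    unfold Uform
    rw [hS0, hS'0]
    ring
  have hU_C : Uform h γ0 ξ0 (C (lam n)) (C' (lam n))
      = (h:ℂ)*1 - (γ0:ℂ) * C (lam n) ((ξ0:ℚ):ℝ) := by
    unfold Uform
    rw [hC0, hC'0]
    ring
  rw [hU_S, hU_C, hlamr, hkre, Complex.norm_real, Real.norm_eq_abs, sq_abs]
  exact hbound a haabs x hx
end
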